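/- arXiv:1912.08872 — 6 statements merged into one kernel-verified Lean document; each statement's English description precedes it below -/
import Mathlib

section
/- Let C be a parsummable category and let φ, ψ : {1,2} × ℕ → ℕ be two injections, with φ^*(C) and ψ^*(C) the associated symmetric monoidal structures on C (with tensor products φ_* and ψ_*, unit object 0, and associativity, symmetry and unit isomorphisms defined from the parsummable structure). Then the identity functor of C, equipped with the natural isomorphisms [ψ,φ]^{x,y} : φ_*(x,y) → ψ_*(x,y) as monoidal structure morphisms and the identity of 0 as unit morphism, is a strong symmetric monoidal functor from φ^*(C) to ψ^*(C): the isomorphisms [ψ,φ]^{x,y} are compatible with the unit, associativity and symmetry isomorphisms of the two symmetric monoidal structures. -/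
open CategoryTheory

/-- The monoid of injective self-maps of `U`, under composition. -/
def Minj (U : Type*) : Submonoid (Function.End U) where
  carrier := {f | Function.Injective f}
  mul_mem' := fun hf hg => hf.comp hg
  one_mem' := Function.injective_id

instance (U : Type*) : FunLike (Minj U) U U where
  coe u := u.1
  coe_injective := fun _ _ h => Subtype.ext h

@[simp] lemma Minj.mul_apply {U : Type*} (u v : Minj U) (a : U) : (u * v) a = u (v a) := rfl

/-- `x` is supported on `A` if every injection fixing `A` elementwise fixes `x`. -/
def Supported {U : Type*} {X : Type*} [MulAction (Minj U) X] (A : Set U) (x : X) : Prop :=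
  ∀ u : Minj U, (∀ a ∈ A, u a = a) → u • x = x

/-- `x` is finitely supported if it is supported on some finite subset of `U`. -/
def FinSupported {U : Type*} {X : Type*} [MulAction (Minj U) X] (x : X) : Prop :=
  ∃ A : Finset U, Supported (A : Set U) x

/-- The support of `x`: the intersection of all finite subsets of `U` on which `x`
is supported. -/
def supp {U : Type*} {X : Type*} [MulAction (Minj U) X] (x : X) : Set U :=
  {i : U | ∀ A : Finset U, Supported (A : Set U) x → i ∈ A}

/-- An `M(U)`-category: a category with an action of the injection monoid on objects,
together with coherent isomorphisms `ι u x : x ≅ u • x`. The action of `u` on morphisms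
is then given by conjugation with these isomorphisms. -/
structure MCat (U : Type*) (C : Type*) [Category C] [MulAction (Minj U) C] where
  ι : ∀ (u : Minj U) (x : C), x ≅ u • x
  ι_mul : ∀ (u v : Minj U) (x : C),
    (ι u x).hom ≫ (ι v (u • x)).hom = (ι (v * u) x).hom ≫ eqToHom (mul_smul v u x)

namespace MCat

variable {U : Type*} {C : Type*} [Category C] [MulAction (Minj U) C]

/-- The action `u_*` of an injection on morphisms: `u_*(f) = ι(u,y) ∘ f ∘ ι(u,x)⁻¹`. -/
def act (h : MCat U C) (u : Minj U) {x y : C} (f : x ⟶ y) : u • x ⟶ u • y :=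
  (h.ι u x).inv ≫ f ≫ (h.ι u y).hom

/-- The natural isomorphism `[v,u]^x := ι(v,x) ∘ ι(u,x)⁻¹ : u • x ⟶ v • x`. -/
def tw (h : MCat U C) (v u : Minj U) (x : C) : u • x ⟶ v • x :=
  (h.ι u x).inv ≫ (h.ι v x).hom

@[simp] lemma act_id (h : MCat U C) (u : Minj U) (x : C) : h.act u (𝟙 x) = 𝟙 (u • x) := by
  simp [act]

@[simp] lemma act_comp (h : MCat U C) (u : Minj U) {x y z : C} (f : x ⟶ y) (g : y ⟶ z) :
    h.act u (f ≫ g) = h.act u f ≫ h.act u g := by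
  simp [act]

lemma ι_natural (h : MCat U C) (u : Minj U) {x y : C} (f : x ⟶ y) :
    (h.ι u x).hom ≫ h.act u f = f ≫ (h.ι u y).hom := by
  simp [act]

end MCat

section ExtensionLemma

/-- Any map that is injective on a finite subset of `ℕ` agrees on that subset with a
permutation of `ℕ`. -/
lemma exists_perm_extend (s : Finset ℕ) (f : ℕ → ℕ) (hf : Set.InjOn f ↑s) :
    ∃ e : Equiv.Perm ℕ, ∀ a ∈ s, e a = f a := by
  classical
  have hSfin : (↑s : Set ℕ).Finite := s.finite_toSet
  have hTfin : (f '' ↑s).Finite := hSfin.image f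
  haveI : Infinite ↥(↑s : Set ℕ)ᶜ := hSfin.infinite_compl.to_subtype
  haveI : Infinite ↥(f '' ↑s)ᶜ := hTfin.infinite_compl.to_subtype
  obtain ⟨e₂⟩ : Nonempty (↥(↑s : Set ℕ)ᶜ ≃ ↥(f '' ↑s)ᶜ) := nonempty_equiv_of_countable
  let e₁ : ↥(↑s : Set ℕ) ≃ ↥(f '' ↑s) := Equiv.Set.imageOfInjOn f ↑s hf
  refine ⟨(Equiv.Set.sumCompl (↑s : Set ℕ)).symm.trans
    ((e₁.sumCongr e₂).trans (Equiv.Set.sumCompl (f '' ↑s))), fun a ha => ?_⟩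
  have ha' : a ∈ (↑s : Set ℕ) := ha
  have h3 : (Equiv.Set.sumCompl (↑s : Set ℕ)).symm a = Sum.inl ⟨a, ha'⟩ :=
    Equiv.Set.sumCompl_symm_apply_of_mem ha'
  simp only [Equiv.trans_apply, h3, Equiv.sumCongr_apply, Sum.map_inl,
    Equiv.Set.sumCompl_apply_inl]
  rfl

variable {X : Type*} [MulAction (Minj ℕ) X]

/-- Two injections agreeing on a finite supporting set act in the same way. -/
lemma smul_eq_smul_of_eqOn {x : X} {A : Finset ℕ}
    (hA : Supported (A : Set ℕ) x) {v w : Minj ℕ} (hvw : ∀ a ∈ A, v a = w a) :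
    v • x = w • x := by
  classical
  set f : ℕ → ℕ := fun b => if hb : b ∈ A.image ⇑v then (Finset.mem_image.mp hb).choose else b
    with hfdef
  have hspec : ∀ b ∈ A.image ⇑v, f b ∈ A ∧ v (f b) = b := by
    intro b hb
    have h1 := (Finset.mem_image.mp hb).choose_spec
    simp only [hfdef, dif_pos hb]
    exact h1
  have hinj : Set.InjOn f ↑(A.image ⇑v) := by
    intro b₁ hb₁ b₂ hb₂ hb
    have h1 := hspec b₁ hb₁
    have h2 := hspec b₂ hb₂
    rw [← h1.2, ← h2.2, hb]
  obtain ⟨e, he⟩ := exists_perm_extend (A.image ⇑v) f hinj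
  have heva : ∀ a ∈ A, e (v a) = a := by
    intro a ha
    have hmem : v a ∈ A.image ⇑v := Finset.mem_image_of_mem _ ha
    have h1 := hspec _ hmem
    have : e (v a) = f (v a) := he _ hmem
    rw [this]
    exact v.2 h1.2
  let γ : Minj ℕ := ⟨(e : ℕ → ℕ), e.injective⟩
  let γ' : Minj ℕ := ⟨(e.symm : ℕ → ℕ), e.symm.injective⟩
  have hγ : γ' * γ = 1 := Subtype.ext (funext fun n => e.symm_apply_apply n)
  have h1 : (γ * v) • x = x := hA (γ * v) (fun a ha => heva a ha)
  have h2 : (γ * w) • x = x := hA (γ * w) (fun a ha => by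
    show e (w a) = a
    rw [← hvw a ha]
    exact heva a ha)
  calc v • x = ((γ' * γ) * v) • x := by rw [hγ, one_mul]
    _ = γ' • ((γ * v) • x) := by rw [mul_assoc, mul_smul γ' (γ * v) x]
    _ = γ' • ((γ * w) • x) := by rw [h1, h2]
    _ = ((γ' * γ) * w) • x := by rw [mul_assoc, mul_smul γ' (γ * w) x]
    _ = w • x := by rw [hγ, one_mul]

/-- If `x` is supported on the finite set `A`, then `w • x` is supported on `w(A)`. -/
lemma supported_image {x : X} {A : Finset ℕ}
    (hA : Supported (A : Set ℕ) x) (w : Minj ℕ) :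
    Supported ((A.image ⇑w : Finset ℕ) : Set ℕ) (w • x) := by
  intro u hu
  rw [← mul_smul]
  exact smul_eq_smul_of_eqOn hA (fun a ha => hu (w a) (by
    exact_mod_cast Finset.mem_image_of_mem _ ha))

lemma supp_subset_of_supported {x : X} {A : Finset ℕ}
    (hA : Supported (A : Set ℕ) x) : supp (U := ℕ) x ⊆ ↑A :=
  fun _ hi => hi A hA

end ExtensionLemma

/-- Two elements are disjointly supported if their supports are disjoint. -/
def DisjSupp {X : Type*} [MulAction (Minj ℕ) X] (x y : X) : Prop :=
  Disjoint (supp (U := ℕ) x) (supp (U := ℕ) y)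

/-- A parsummable category: a tame `M(ℕ)`-category together with a distinguished object `0`
supported on the empty set and a sum operation, defined on disjointly supported objects and
morphisms, which is strictly unital, associative and commutative and strictly commutes with
the `M(ℕ)`-action. -/
structure ParSum (C : Type*) [Category C] [MulAction (Minj ℕ) C] extends MCat ℕ C where
  tame : ∀ x : C, FinSupported (U := ℕ) x
  zero : C
  supp_zero : Supported (∅ : Set ℕ) zero
  add : C → C → C
  addHom : ∀ {x x' y y' : C}, DisjSupp x x' → DisjSupp y y' →
    (x ⟶ y) → (x' ⟶ y') → (add x x' ⟶ add y y')
  addHom_id : ∀ {x x' : C} (h : DisjSupp x x'), addHom h h (𝟙 x) (𝟙 x') = 𝟙 (add x x')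
  addHom_comp : ∀ {x y z x' y' z' : C} (hx : DisjSupp x x') (hy : DisjSupp y y')
    (hz : DisjSupp z z') (f : x ⟶ y) (g : y ⟶ z) (f' : x' ⟶ y') (g' : y' ⟶ z'),
    addHom hx hz (f ≫ g) (f' ≫ g') = addHom hx hy f f' ≫ addHom hy hz g g'
  add_zero' : ∀ x : C, add x zero = x
  zero_add' : ∀ x : C, add zero x = x
  addHom_zero : ∀ {x y : C} (hx : DisjSupp x zero) (hy : DisjSupp y zero) (f : x ⟶ y),
    addHom hx hy f (𝟙 zero) = eqToHom (add_zero' x) ≫ f ≫ eqToHom (add_zero' y).symm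
  zero_addHom : ∀ {x y : C} (hx : DisjSupp zero x) (hy : DisjSupp zero y) (f : x ⟶ y),
    addHom hx hy (𝟙 zero) f = eqToHom (zero_add' x) ≫ f ≫ eqToHom (zero_add' y).symm
  add_comm' : ∀ {x y : C}, DisjSupp x y → add x y = add y x
  addHom_comm : ∀ {x y x' y' : C} (hx : DisjSupp x x') (hy : DisjSupp y y')
    (hx' : DisjSupp x' x) (hy' : DisjSupp y' y) (f : x ⟶ y) (f' : x' ⟶ y'),
    addHom hx' hy' f' f = eqToHom (add_comm' hx).symm ≫ addHom hx hy f f' ≫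
      eqToHom (add_comm' hy)
  add_assoc' : ∀ {x y z : C}, DisjSupp x y → DisjSupp y z → DisjSupp x z →
    add (add x y) z = add x (add y z)
  addHom_assoc : ∀ {x y z x' y' z' : C}
    (hxy : DisjSupp x y) (hyz : DisjSupp y z) (hxz : DisjSupp x z)
    (hxy' : DisjSupp x' y') (hyz' : DisjSupp y' z') (hxz' : DisjSupp x' z')
    (hs : DisjSupp (add x y) z) (hs' : DisjSupp (add x' y') z')
    (ht : DisjSupp x (add y z)) (ht' : DisjSupp x' (add y' z'))
    (f : x ⟶ x') (g : y ⟶ y') (k : z ⟶ z'),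
    addHom hs hs' (addHom hxy hxy' f g) k =
      eqToHom (add_assoc' hxy hyz hxz) ≫ addHom ht ht' f (addHom hyz hyz' g k) ≫
        eqToHom (add_assoc' hxy' hyz' hxz').symm
  smul_add : ∀ (u : Minj ℕ) {x y : C}, DisjSupp x y → u • add x y = add (u • x) (u • y)
  act_add : ∀ (u : Minj ℕ) {x x' y y' : C} (hx : DisjSupp x x') (hy : DisjSupp y y')
    (hux : DisjSupp (u • x) (u • x')) (huy : DisjSupp (u • y) (u • y'))
    (f : x ⟶ y) (f' : x' ⟶ y'),
    toMCat.act u (addHom hx hy f f') =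
      eqToHom (smul_add u hx) ≫ addHom hux huy (toMCat.act u f) (toMCat.act u f') ≫
        eqToHom (smul_add u hy).symm
  ι_add : ∀ (u : Minj ℕ) {x y : C} (hxy : DisjSupp x y) (hu : DisjSupp (u • x) (u • y)),
    (toMCat.ι u (add x y)).hom =
      addHom hxy hu (toMCat.ι u x).hom (toMCat.ι u y).hom ≫ eqToHom (smul_add u hxy).symm

section Phi

variable {C : Type*} [Category C] [MulAction (Minj ℕ) C]

/-- The component `φ^i = φ(i,-)` of an injection `φ : {1,2} × ℕ → ℕ`, as an element
of `M(ℕ)`. -/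
def phiC (φ : Fin 2 × ℕ → ℕ) (hφ : Function.Injective φ) (i : Fin 2) : Minj ℕ :=
  ⟨fun n => φ (i, n), fun _ _ hab => congrArg Prod.snd (hφ hab)⟩

lemma disjoint_phiC_ranges (φ : Fin 2 × ℕ → ℕ) (hφ : Function.Injective φ) :
    Disjoint (Set.range ⇑(phiC φ hφ 0)) (Set.range ⇑(phiC φ hφ 1)) := by
  rw [Set.disjoint_left]
  rintro b ⟨n, rfl⟩ ⟨m, hm⟩
  have h1 : (1 : Fin 2) = 0 := congrArg Prod.fst (hφ hm)
  exact absurd h1 (by decide)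

lemma range_mul_subset (u v : Minj ℕ) : Set.range ⇑(u * v) ⊆ Set.range ⇑u := by
  rintro b ⟨a, rfl⟩
  exact ⟨v a, rfl⟩

lemma range_mul_disjoint (u : Minj ℕ) {v w : Minj ℕ}
    (hd : Disjoint (Set.range ⇑v) (Set.range ⇑w)) :
    Disjoint (Set.range ⇑(u * v)) (Set.range ⇑(u * w)) := by
  rw [Set.disjoint_left] at hd ⊢
  rintro b ⟨a, rfl⟩ ⟨a', ha'⟩
  exact hd ⟨a, rfl⟩ ⟨a', u.2 ha'⟩

namespace ParSum

lemma supp_smul_subset (h : ParSum C) (w : Minj ℕ) (x : C) :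
    supp (U := ℕ) (w • x) ⊆ Set.range ⇑w := by
  obtain ⟨A, hA⟩ := h.tame x
  intro i hi
  have := hi (A.image ⇑w) (supported_image hA w)
  obtain ⟨a, _, rfl⟩ := Finset.mem_image.mp this
  exact ⟨a, rfl⟩

/-- Objects moved into disjoint ranges are disjointly supported. -/
lemma disj_smul (h : ParSum C) {w w' : Minj ℕ}
    (hd : Disjoint (Set.range ⇑w) (Set.range ⇑w')) (x y : C) :
    DisjSupp (w • x) (w' • y) :=
  Disjoint.mono (h.supp_smul_subset w x) (h.supp_smul_subset w' y) hd

lemma supported_add_finset (h : ParSum C) {x y : C} (hd : DisjSupp x y) {A B : Finset ℕ}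
    (hx : Supported (A : Set ℕ) x) (hy : Supported (B : Set ℕ) y) :
    Supported ((A ∪ B : Finset ℕ) : Set ℕ) (h.add x y) := by
  intro u hu
  rw [h.smul_add u hd, hx u (fun a ha => hu a (by simp [ha])),
    hy u (fun a ha => hu a (by simp [ha]))]

lemma supp_add_subset (h : ParSum C) {x y : C} (hd : DisjSupp x y) :
    supp (U := ℕ) (h.add x y) ⊆ supp (U := ℕ) x ∪ supp (U := ℕ) y := by
  intro i hi
  by_contra hc
  simp only [Set.mem_union, not_or] at hc
  obtain ⟨hcx, hcy⟩ := hc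
  simp only [supp, Set.mem_setOf_eq, not_forall] at hcx hcy
  obtain ⟨A', hA', hiA'⟩ := hcx
  obtain ⟨B', hB', hiB'⟩ := hcy
  have := hi (A' ∪ B') (h.supported_add_finset hd hA' hB')
  simp only [Finset.mem_union] at this
  tauto

lemma supp_add_smul_subset (h : ParSum C) (u v : Minj ℕ)
    (hd : Disjoint (Set.range ⇑u) (Set.range ⇑v)) (x y : C) :
    supp (U := ℕ) (h.add (u • x) (v • y)) ⊆ Set.range ⇑u ∪ Set.range ⇑v := by
  intro i hi
  have := h.supp_add_subset (h.disj_smul hd x y) hi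
  rcases this with hl | hr
  · exact Or.inl (h.supp_smul_subset u x hl)
  · exact Or.inr (h.supp_smul_subset v y hr)

lemma smul_zero' (h : ParSum C) (u : Minj ℕ) : u • h.zero = h.zero :=
  h.supp_zero u (fun a ha => absurd ha (Set.notMem_empty a))

lemma supp_zero_subset (h : ParSum C) : supp (U := ℕ) h.zero ⊆ (∅ : Set ℕ) := by
  intro i hi
  have := hi ∅ (by intro u _; exact h.smul_zero' u)
  simp at this

lemma disj_zero_right (h : ParSum C) (x : C) : DisjSupp x h.zero :=
  Disjoint.mono_right h.supp_zero_subset (by simp)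

lemma disj_zero_left (h : ParSum C) (x : C) : DisjSupp h.zero x :=
  Disjoint.mono_left h.supp_zero_subset (by simp)

end ParSum

end Phi

section MonDefs

variable {C : Type*} [Category C] [MulAction (Minj ℕ) C]

/-- The tensor product `φ_*(x,y) = φ¹ • x + φ² • y` on objects. -/
def Fobj (h : ParSum C) (φ : Fin 2 × ℕ → ℕ) (hφ : Function.Injective φ) (x y : C) : C := h.add (phiC φ hφ 0 • x) (phiC φ hφ 1 • y)

lemma d12 (h : ParSum C) (φ : Fin 2 × ℕ → ℕ) (hφ : Function.Injective φ) (x y : C) : DisjSupp (phiC φ hφ 0 • x) (phiC φ hφ 1 • y) :=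
  h.disj_smul (disjoint_phiC_ranges φ hφ) x y

lemma d21 (h : ParSum C) (φ : Fin 2 × ℕ → ℕ) (hφ : Function.Injective φ) (x y : C) : DisjSupp (phiC φ hφ 1 • x) (phiC φ hφ 0 • y) :=
  h.disj_smul (disjoint_phiC_ranges φ hφ).symm x y

/-- The tensor product `φ_*(f,g) = φ¹_*(f) + φ²_*(g)` on morphisms. -/
def Fhom (h : ParSum C) (φ : Fin 2 × ℕ → ℕ) (hφ : Function.Injective φ) {x x' y y' : C} (f : x ⟶ x') (g : y ⟶ y') :
    Fobj h φ hφ x y ⟶ Fobj h φ hφ x' y' :=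
  h.addHom (d12 h φ hφ x y) (d12 h φ hφ x' y')
    (h.toMCat.act (phiC φ hφ 0) f) (h.toMCat.act (phiC φ hφ 1) g)

/-- The symmetry isomorphism `τ_{x,y} = [φ∘t, φ]^{x,y} : φ_*(x,y) ⟶ φ_*(y,x)`. -/
def braiding (h : ParSum C) (φ : Fin 2 × ℕ → ℕ) (hφ : Function.Injective φ) (x y : C) : Fobj h φ hφ x y ⟶ Fobj h φ hφ y x :=
  h.addHom (d12 h φ hφ x y) (d21 h φ hφ x y)
    (h.toMCat.tw (phiC φ hφ 1) (phiC φ hφ 0) x) (h.toMCat.tw (phiC φ hφ 0) (phiC φ hφ 1) y) ≫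
    eqToHom (h.add_comm' (d21 h φ hφ x y))

lemma zero_right_eq (h : ParSum C) (φ : Fin 2 × ℕ → ℕ) (hφ : Function.Injective φ) (x : C) : phiC φ hφ 0 • x = Fobj h φ hφ x h.zero := by
  show _ = h.add _ _
  rw [h.smul_zero' (phiC φ hφ 1), h.add_zero']

lemma zero_left_eq (h : ParSum C) (φ : Fin 2 × ℕ → ℕ) (hφ : Function.Injective φ) (x : C) : phiC φ hφ 1 • x = Fobj h φ hφ h.zero x := by
  show _ = h.add _ _
  rw [h.smul_zero' (phiC φ hφ 0), h.zero_add']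

/-- The right unit isomorphism `[φ¹,1]^x : x ⟶ φ_*(x,0)`. -/
def rightUnitor (h : ParSum C) (φ : Fin 2 × ℕ → ℕ) (hφ : Function.Injective φ) (x : C) : x ⟶ Fobj h φ hφ x h.zero :=
  eqToHom (one_smul (Minj ℕ) x).symm ≫ h.toMCat.tw (phiC φ hφ 0) 1 x ≫
    eqToHom (zero_right_eq h φ hφ x)

/-- The left unit isomorphism `[φ²,1]^x : x ⟶ φ_*(0,x)`. -/
def leftUnitor (h : ParSum C) (φ : Fin 2 × ℕ → ℕ) (hφ : Function.Injective φ) (x : C) : x ⟶ Fobj h φ hφ h.zero x :=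
  eqToHom (one_smul (Minj ℕ) x).symm ≫ h.toMCat.tw (phiC φ hφ 1) 1 x ≫
    eqToHom (zero_left_eq h φ hφ x)

lemma d00_01 (h : ParSum C) (φ : Fin 2 × ℕ → ℕ) (hφ : Function.Injective φ) (x y : C) :
    DisjSupp ((phiC φ hφ 0 * phiC φ hφ 0) • x) ((phiC φ hφ 0 * phiC φ hφ 1) • y) :=
  h.disj_smul (range_mul_disjoint _ (disjoint_phiC_ranges φ hφ)) x y

lemma d10_11 (h : ParSum C) (φ : Fin 2 × ℕ → ℕ) (hφ : Function.Injective φ) (y z : C) :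
    DisjSupp ((phiC φ hφ 1 * phiC φ hφ 0) • y) ((phiC φ hφ 1 * phiC φ hφ 1) • z) :=
  h.disj_smul (range_mul_disjoint _ (disjoint_phiC_ranges φ hφ)) y z

lemma d0_10 (h : ParSum C) (φ : Fin 2 × ℕ → ℕ) (hφ : Function.Injective φ) (x y : C) : DisjSupp (phiC φ hφ 0 • x) ((phiC φ hφ 1 * phiC φ hφ 0) • y) :=
  h.disj_smul (Disjoint.mono_right (range_mul_subset _ _) (disjoint_phiC_ranges φ hφ)) x y

lemma d0_11 (h : ParSum C) (φ : Fin 2 × ℕ → ℕ) (hφ : Function.Injective φ) (x z : C) : DisjSupp (phiC φ hφ 0 • x) ((phiC φ hφ 1 * phiC φ hφ 1) • z) :=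
  h.disj_smul (Disjoint.mono_right (range_mul_subset _ _) (disjoint_phiC_ranges φ hφ)) x z

lemma dI1 (h : ParSum C) (φ : Fin 2 × ℕ → ℕ) (hφ : Function.Injective φ) (x y z : C) :
    DisjSupp (h.add ((phiC φ hφ 0 * phiC φ hφ 0) • x) ((phiC φ hφ 0 * phiC φ hφ 1) • y))
      (phiC φ hφ 1 • z) := by
  have h1 : supp (U := ℕ)
      (h.add ((phiC φ hφ 0 * phiC φ hφ 0) • x) ((phiC φ hφ 0 * phiC φ hφ 1) • y)) ⊆
      Set.range ⇑(phiC φ hφ 0) := by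
    intro i hi
    rcases h.supp_add_smul_subset _ _ (range_mul_disjoint _ (disjoint_phiC_ranges φ hφ)) x y hi
      with h2 | h2
    · exact range_mul_subset _ _ h2
    · exact range_mul_subset _ _ h2
  exact Disjoint.mono h1 (h.supp_smul_subset _ z) (disjoint_phiC_ranges φ hφ)

lemma dI2 (h : ParSum C) (φ : Fin 2 × ℕ → ℕ) (hφ : Function.Injective φ) (x y z : C) :
    DisjSupp (h.add (phiC φ hφ 0 • x) ((phiC φ hφ 1 * phiC φ hφ 0) • y))
      ((phiC φ hφ 1 * phiC φ hφ 1) • z) := by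
  have h1 : supp (U := ℕ)
      (h.add (phiC φ hφ 0 • x) ((phiC φ hφ 1 * phiC φ hφ 0) • y)) ⊆
      Set.range ⇑(phiC φ hφ 0) ∪ Set.range ⇑(phiC φ hφ 1 * phiC φ hφ 0) := by
    intro i hi
    exact h.supp_add_smul_subset _ _
      (Disjoint.mono_right (range_mul_subset _ _) (disjoint_phiC_ranges φ hφ)) x y hi
  refine Disjoint.mono h1 (h.supp_smul_subset _ z) (Set.disjoint_union_left.mpr ⟨?_, ?_⟩)
  · exact Disjoint.mono_right (range_mul_subset _ _) (disjoint_phiC_ranges φ hφ)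
  · exact range_mul_disjoint _ (disjoint_phiC_ranges φ hφ)

lemma dI3 (h : ParSum C) (φ : Fin 2 × ℕ → ℕ) (hφ : Function.Injective φ) (x y z : C) :
    DisjSupp (phiC φ hφ 0 • x)
      (h.add ((phiC φ hφ 1 * phiC φ hφ 0) • y) ((phiC φ hφ 1 * phiC φ hφ 1) • z)) := by
  have h1 : supp (U := ℕ)
      (h.add ((phiC φ hφ 1 * phiC φ hφ 0) • y) ((phiC φ hφ 1 * phiC φ hφ 1) • z)) ⊆
      Set.range ⇑(phiC φ hφ 1) := by
    intro i hi
    rcases h.supp_add_smul_subset _ _ (range_mul_disjoint _ (disjoint_phiC_ranges φ hφ)) y z hi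
      with h2 | h2
    · exact range_mul_subset _ _ h2
    · exact range_mul_subset _ _ h2
  exact Disjoint.mono (h.supp_smul_subset _ x) h1 (disjoint_phiC_ranges φ hφ)

lemma assocSrc_eq (h : ParSum C) (φ : Fin 2 × ℕ → ℕ) (hφ : Function.Injective φ) (x y z : C) :
    Fobj h φ hφ (Fobj h φ hφ x y) z =
      h.add (h.add ((phiC φ hφ 0 * phiC φ hφ 0) • x) ((phiC φ hφ 0 * phiC φ hφ 1) • y))
        (phiC φ hφ 1 • z) := by
  show h.add (phiC φ hφ 0 • h.add (phiC φ hφ 0 • x) (phiC φ hφ 1 • y)) (phiC φ hφ 1 • z) = _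
  rw [h.smul_add (phiC φ hφ 0) (d12 h φ hφ x y), ← mul_smul, ← mul_smul]

lemma assocTgt_eq (h : ParSum C) (φ : Fin 2 × ℕ → ℕ) (hφ : Function.Injective φ) (x y z : C) :
    Fobj h φ hφ x (Fobj h φ hφ y z) =
      h.add (phiC φ hφ 0 • x)
        (h.add ((phiC φ hφ 1 * phiC φ hφ 0) • y) ((phiC φ hφ 1 * phiC φ hφ 1) • z)) := by
  show h.add (phiC φ hφ 0 • x) (phiC φ hφ 1 • h.add (phiC φ hφ 0 • y) (phiC φ hφ 1 • z)) = _
  rw [h.smul_add (phiC φ hφ 1) (d12 h φ hφ y z), ← mul_smul, ← mul_smul]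

lemma assocMid_eq (h : ParSum C) (φ : Fin 2 × ℕ → ℕ) (hφ : Function.Injective φ) (x y z : C) :
    h.add (h.add (phiC φ hφ 0 • x) ((phiC φ hφ 1 * phiC φ hφ 0) • y))
        ((phiC φ hφ 1 * phiC φ hφ 1) • z) =
      h.add (phiC φ hφ 0 • x)
        (h.add ((phiC φ hφ 1 * phiC φ hφ 0) • y) ((phiC φ hφ 1 * phiC φ hφ 1) • z)) :=
  h.add_assoc' (d0_10 h φ hφ x y) (d10_11 h φ hφ y z) (d0_11 h φ hφ x z)

/-- The associativity isomorphism
`α_{x,y,z} = [φ(1⊔φ), φ(φ⊔1)]^{x,y,z} : φ_*(φ_*(x,y),z) ⟶ φ_*(x,φ_*(y,z))`. -/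
def phiAssociator (h : ParSum C) (φ : Fin 2 × ℕ → ℕ) (hφ : Function.Injective φ) (x y z : C) :
    Fobj h φ hφ (Fobj h φ hφ x y) z ⟶ Fobj h φ hφ x (Fobj h φ hφ y z) :=
  eqToHom (assocSrc_eq h φ hφ x y z) ≫
    h.addHom (dI1 h φ hφ x y z) (dI2 h φ hφ x y z)
      (h.addHom (d00_01 h φ hφ x y) (d0_10 h φ hφ x y)
        (h.toMCat.tw (phiC φ hφ 0) (phiC φ hφ 0 * phiC φ hφ 0) x)
        (h.toMCat.tw (phiC φ hφ 1 * phiC φ hφ 0) (phiC φ hφ 0 * phiC φ hφ 1) y))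
      (h.toMCat.tw (phiC φ hφ 1 * phiC φ hφ 1) (phiC φ hφ 1) z) ≫
    eqToHom ((assocMid_eq h φ hφ x y z).trans (assocTgt_eq h φ hφ x y z).symm)

end MonDefs

/-- The natural isomorphism `[ψ,φ]^{x,y} : φ_*(x,y) ⟶ ψ_*(x,y)`, the monoidal structure
isomorphism of the identity functor from `φ^*(C)` to `ψ^*(C)`. -/
def mixTw {C : Type*} [Category C] [MulAction (Minj ℕ) C] (h : ParSum C)
    (φ : Fin 2 × ℕ → ℕ) (hφ : Function.Injective φ)
    (ψ : Fin 2 × ℕ → ℕ) (hψ : Function.Injective ψ) (x y : C) :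
    Fobj h φ hφ x y ⟶ Fobj h ψ hψ x y :=
  h.addHom (d12 h φ hφ x y) (d12 h ψ hψ x y)
    (h.toMCat.tw (phiC ψ hψ 0) (phiC φ hφ 0) x) (h.toMCat.tw (phiC ψ hψ 1) (phiC φ hφ 1) y)

section AuxMCat

namespace MCat

variable {U : Type*} {C : Type*} [Category C] [MulAction (Minj U) C] (h : MCat U C)

lemma tw_tw (w v u : Minj U) (x : C) : h.tw v u x ≫ h.tw w v x = h.tw w u x := by
  simp [tw]

lemma ι_monoid_congr {u v : Minj U} (e : u = v) (x : C) :
    (h.ι u x).hom = (h.ι v x).hom ≫ eqToHom (by rw [e]) := by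
  subst e; simp

lemma ι_congr {a b : C} (e : a = b) (u : Minj U) :
    (h.ι u a).hom = eqToHom e ≫ (h.ι u b).hom ≫ eqToHom (congrArg (u • ·) e).symm := by
  subst e; simp

lemma ι_one (x : C) : (h.ι 1 x).hom = eqToHom (one_smul (Minj U) x).symm := by
  have key := h.ι_mul 1 1 x
  rw [h.ι_monoid_congr (one_mul (1 : Minj U)) x, Category.assoc] at key
  have key2 := (cancel_epi (h.ι 1 x).hom).mp key
  rw [h.ι_congr (one_smul (Minj U) x).symm 1, key2]
  simp

lemma ι_one_inv (x : C) : (h.ι 1 x).inv = eqToHom (one_smul (Minj U) x) := by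
  rw [← cancel_epi (h.ι 1 x).hom, Iso.hom_inv_id, ι_one]
  simp

lemma ι_smul (u w : Minj U) (x : C) :
    (h.ι u (w • x)).hom = (h.ι w x).inv ≫ (h.ι (u * w) x).hom ≫ eqToHom (mul_smul u w x) := by
  rw [Iso.eq_inv_comp]
  exact h.ι_mul w u x

lemma ι_smul_inv (u w : Minj U) (x : C) :
    (h.ι u (w • x)).inv =
      eqToHom (mul_smul u w x).symm ≫ (h.ι (u * w) x).inv ≫ (h.ι w x).hom := by
  rw [← cancel_epi (h.ι u (w • x)).hom, Iso.hom_inv_id, ι_smul]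
  simp

lemma tw_smul (v u w : Minj U) (x : C) :
    h.tw v u (w • x) =
      eqToHom (mul_smul u w x).symm ≫ h.tw (v * w) (u * w) x ≫ eqToHom (mul_smul v w x) := by
  simp [tw, ι_smul, ι_smul_inv]

lemma act_tw (u v w : Minj U) (x : C) :
    h.act u (h.tw v w x) =
      eqToHom (mul_smul u w x).symm ≫ h.tw (u * v) (u * w) x ≫ eqToHom (mul_smul u v x) := by
  simp [act, tw, ι_smul, ι_smul_inv]

lemma tw_one (u : Minj U) (x : C) :
    h.tw u 1 x = eqToHom (one_smul (Minj U) x) ≫ (h.ι u x).hom := by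
  simp [tw, ι_one_inv]

end MCat

end AuxMCat

section AuxParSum

namespace ParSum

variable {C : Type*} [Category C] [MulAction (Minj ℕ) C]

lemma supp_smul_subset_image (h : ParSum C) (u : Minj ℕ) (x : C) :
    supp (U := ℕ) (u • x) ⊆ ⇑u '' supp (U := ℕ) x := by
  intro i hi
  obtain ⟨A, hA⟩ := h.tame x
  obtain ⟨a, haA, hai⟩ := Finset.mem_image.mp (hi (A.image ⇑u) (supported_image hA u))
  refine ⟨a, fun B hB => ?_, hai⟩
  obtain ⟨b, hbB, hbi⟩ := Finset.mem_image.mp (hi (B.image ⇑u) (supported_image hB u))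
  exact (u.2 (hbi.trans hai.symm) : b = a) ▸ hbB

lemma disjsupp_smul (h : ParSum C) (u : Minj ℕ) {x y : C} (hd : DisjSupp x y) : DisjSupp (u • x) (u • y) :=
  Disjoint.mono (h.supp_smul_subset_image u x) (h.supp_smul_subset_image u y)
    ((Set.disjoint_image_iff u.2).mpr hd)

lemma disj_add_smul (h : ParSum C) {u v w : Minj ℕ}
    (h1 : Disjoint (Set.range ⇑u) (Set.range ⇑w)) (h2 : Disjoint (Set.range ⇑v) (Set.range ⇑w))
    (huv : Disjoint (Set.range ⇑u) (Set.range ⇑v)) (x y z : C) :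
    DisjSupp (h.add (u • x) (v • y)) (w • z) :=
  Disjoint.mono (h.supp_add_smul_subset u v huv x y) (h.supp_smul_subset w z)
    (Set.disjoint_union_left.mpr ⟨h1, h2⟩)

lemma disj_smul_add (h : ParSum C) {u v w : Minj ℕ}
    (h1 : Disjoint (Set.range ⇑u) (Set.range ⇑v)) (h2 : Disjoint (Set.range ⇑u) (Set.range ⇑w))
    (hvw : Disjoint (Set.range ⇑v) (Set.range ⇑w)) (x y z : C) :
    DisjSupp (u • x) (h.add (v • y) (w • z)) :=
  Disjoint.mono (h.supp_smul_subset u x) (h.supp_add_smul_subset v w hvw y z)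
    (Set.disjoint_union_right.mpr ⟨h1, h2⟩)

end ParSum

end AuxParSum

section AuxGlue

namespace ParSum

variable {C : Type*} [Category C] [MulAction (Minj ℕ) C]

lemma id_conj (h : ParSum C) {a b : C} (e : a = b) :
    𝟙 a = eqToHom e ≫ 𝟙 b ≫ eqToHom e.symm := by
  subst e; simp

lemma addHom_cast (h : ParSum C) {x x' y y' p p' q q' : C}
    (hx : DisjSupp x x') (hy : DisjSupp y y') (hp : DisjSupp p p') (hq : DisjSupp q q')
    (e1 : x = p) (e2 : q = y) (e3 : x' = p') (e4 : q' = y') (f : p ⟶ q) (g : p' ⟶ q') :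
    h.addHom hx hy (eqToHom e1 ≫ f ≫ eqToHom e2) (eqToHom e3 ≫ g ≫ eqToHom e4) =
      eqToHom (by rw [e1, e3]) ≫ h.addHom hp hq f g ≫ eqToHom (by rw [← e2, ← e4]) := by
  subst e1; subst e2; subst e3; subst e4
  simp

lemma addHom_cast_right (h : ParSum C) {x x' y y' p' q' : C}
    (hx : DisjSupp x x') (hy : DisjSupp y y') (hp : DisjSupp x p') (hq : DisjSupp y q')
    (e3 : x' = p') (e4 : q' = y') (f : x ⟶ y) (g : p' ⟶ q') :
    h.addHom hx hy f (eqToHom e3 ≫ g ≫ eqToHom e4) =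
      eqToHom (by rw [e3]) ≫ h.addHom hp hq f g ≫ eqToHom (by rw [← e4]) := by
  subst e3; subst e4
  simp

lemma addHom_cast_left (h : ParSum C) {x x' y y' p q : C}
    (hx : DisjSupp x x') (hy : DisjSupp y y') (hp : DisjSupp p x') (hq : DisjSupp q y')
    (e1 : x = p) (e2 : q = y) (f : p ⟶ q) (g : x' ⟶ y') :
    h.addHom hx hy (eqToHom e1 ≫ f ≫ eqToHom e2) g =
      eqToHom (by rw [e1]) ≫ h.addHom hp hq f g ≫ eqToHom (by rw [← e2]) := by
  subst e1; subst e2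
  simp

lemma ι_zero (h : ParSum C) (u : Minj ℕ) :
    (h.toMCat.ι u h.zero).hom = eqToHom (h.smul_zero' u).symm := by
  have d : DisjSupp h.zero h.zero := h.disj_zero_left h.zero
  have d2 : DisjSupp (u • h.zero) (u • h.zero) := h.disjsupp_smul u d
  have dm : DisjSupp h.zero (u • h.zero) := by
    have := h.disj_zero_left (u • h.zero); exact this
  have dmq : DisjSupp (u • h.zero) h.zero := h.disj_zero_right _
  set f := (h.toMCat.ι u h.zero).hom with hf
  have key := h.ι_add u d d2
  -- rewrite the left ι at object (add 0 0)
  rw [h.toMCat.ι_congr (h.add_zero' h.zero) u] at key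
  -- split the diagonal addHom
  have split : h.addHom d d2 f f =
      h.addHom d dm (𝟙 h.zero) f ≫ h.addHom dm d2 f (𝟙 (u • h.zero)) := by
    rw [← h.addHom_comp d dm d2 (𝟙 h.zero) f f (𝟙 (u • h.zero))]
    simp
  rw [split, h.zero_addHom d dm f] at key
  rw [h.id_conj (h.smul_zero' u)] at key
  rw [h.addHom_cast_right dm d2 d dmq (h.smul_zero' u) (h.smul_zero' u).symm f (𝟙 h.zero)] at key
  rw [h.addHom_zero d dmq f] at key
  -- now key is an equation between eqToHom-chains with f appearing
  simp only [Category.assoc, eqToHom_trans, eqToHom_trans_assoc] at key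
  have key2 := (cancel_epi (eqToHom (h.zero_add' h.zero))).mp key
  have key3 := ((cancel_epi f).mp key2).symm
  rw [eqToHom_comp_iff, comp_eqToHom_iff] at key3
  exact key3.trans (by simp)

lemma ι_zero_inv (h : ParSum C) (u : Minj ℕ) :
    (h.toMCat.ι u h.zero).inv = eqToHom (h.smul_zero' u) := by
  rw [← cancel_epi (h.toMCat.ι u h.zero).hom, Iso.hom_inv_id, h.ι_zero]
  simp

lemma tw_zero (h : ParSum C) (v u : Minj ℕ) :
    h.toMCat.tw v u h.zero = eqToHom ((h.smul_zero' u).trans (h.smul_zero' v).symm) := by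
  simp only [MCat.tw, h.ι_zero_inv, h.ι_zero, eqToHom_trans]

end ParSum

end AuxGlue

section AuxGadd

namespace ParSum

variable {C : Type*} [Category C] [MulAction (Minj ℕ) C]

/-- A twist isomorphism with built-in `eqToHom` casts at both ends. -/
def gtw (h : ParSum C) (v u : Minj ℕ) (x : C) {a b : C} (ea : a = u • x) (eb : b = v • x) :
    a ⟶ b :=
  eqToHom ea ≫ h.toMCat.tw v u x ≫ eqToHom eb.symm

/-- A sum morphism with built-in `eqToHom` casts at both ends. -/
def gadd (h : ParSum C) {x x' y y' : C} (hx : DisjSupp x x') (hy : DisjSupp y y')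
    (f : x ⟶ y) (g : x' ⟶ y') {a b : C} (ea : a = h.add x x') (eb : b = h.add y y') :
    a ⟶ b :=
  eqToHom ea ≫ h.addHom hx hy f g ≫ eqToHom eb.symm

lemma gtw_gtw (h : ParSum C) (w v u : Minj ℕ) (x : C) {a b c : C}
    (ea : a = u • x) (eb eb' : b = v • x) (ec : c = w • x) :
    gtw h v u x ea eb ≫ gtw h w v x eb' ec = gtw h w u x ea ec := by
  subst ea; subst ec; subst eb
  simp [gtw, MCat.tw]

lemma gadd_gadd (h : ParSum C) {x x' y y' z z' a b c : C}
    (hx : DisjSupp x x') (hy hy' : DisjSupp y y') (hz : DisjSupp z z')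
    (f : x ⟶ y) (g : x' ⟶ y') (f' : y ⟶ z) (g' : y' ⟶ z')
    (ea : a = h.add x x') (eb eb' : b = h.add y y') (ec : c = h.add z z') :
    gadd h hx hy f g ea eb ≫ gadd h hy' hz f' g' eb' ec =
      gadd h hx hz (f ≫ f') (g ≫ g') ea ec := by
  obtain rfl : hy = hy' := rfl
  subst ea; subst ec; subst eb
  simp only [gadd, eqToHom_refl, Category.comp_id, Category.id_comp,
    h.addHom_comp hx hy hz f f' g g']

lemma gadd_cast (h : ParSum C) {x x' y y' p p' q q' a b : C}
    (hx : DisjSupp x x') (hy : DisjSupp y y') (hp : DisjSupp p p') (hq : DisjSupp q q')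
    (e1 : x = p) (e2 : q = y) (e3 : x' = p') (e4 : q' = y') (f : p ⟶ q) (g : p' ⟶ q')
    (ea : a = h.add x x') (eb : b = h.add y y') :
    gadd h hx hy (eqToHom e1 ≫ f ≫ eqToHom e2) (eqToHom e3 ≫ g ≫ eqToHom e4) ea eb =
      gadd h hp hq f g (ea.trans (by rw [e1, e3])) (eb.trans (by rw [← e2, ← e4])) := by
  subst e1; subst e2; subst e3; subst e4
  simp [gadd]

lemma gadd_cast_left (h : ParSum C) {x x' y y' p q a b : C}
    (hx : DisjSupp x x') (hy : DisjSupp y y') (hp : DisjSupp p x') (hq : DisjSupp q y')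
    (e1 : x = p) (e2 : q = y) (f : p ⟶ q) (g : x' ⟶ y')
    (ea : a = h.add x x') (eb : b = h.add y y') :
    gadd h hx hy (eqToHom e1 ≫ f ≫ eqToHom e2) g ea eb =
      gadd h hp hq f g (ea.trans (by rw [e1])) (eb.trans (by rw [← e2])) := by
  subst e1; subst e2
  simp [gadd]

lemma gadd_cast_right (h : ParSum C) {x x' y y' p' q' a b : C}
    (hx : DisjSupp x x') (hy : DisjSupp y y') (hp : DisjSupp x p') (hq : DisjSupp y q')
    (e3 : x' = p') (e4 : q' = y') (f : x ⟶ y) (g : p' ⟶ q')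
    (ea : a = h.add x x') (eb : b = h.add y y') :
    gadd h hx hy f (eqToHom e3 ≫ g ≫ eqToHom e4) ea eb =
      gadd h hp hq f g (ea.trans (by rw [e3])) (eb.trans (by rw [← e4])) := by
  subst e3; subst e4
  simp [gadd]

lemma gadd_assoc (h : ParSum C) {x y z x' y' z' a b : C}
    (hxy : DisjSupp x y) (hyz : DisjSupp y z) (hxz : DisjSupp x z)
    (hxy' : DisjSupp x' y') (hyz' : DisjSupp y' z') (hxz' : DisjSupp x' z')
    (hs : DisjSupp (h.add x y) z) (hs' : DisjSupp (h.add x' y') z')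
    (ht : DisjSupp x (h.add y z)) (ht' : DisjSupp x' (h.add y' z'))
    (f : x ⟶ x') (g : y ⟶ y') (k : z ⟶ z')
    (ea : a = h.add x (h.add y z)) (eb : b = h.add x' (h.add y' z')) :
    gadd h ht ht' f (h.addHom hyz hyz' g k) ea eb =
      gadd h hs hs' (h.addHom hxy hxy' f g) k
        (ea.trans (h.add_assoc' hxy hyz hxz).symm)
        (eb.trans (h.add_assoc' hxy' hyz' hxz').symm) := by
  subst ea; subst eb
  simp only [gadd, h.addHom_assoc hxy hyz hxz hxy' hyz' hxz' hs hs' ht ht' f g k]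
  simp

lemma gadd_comm (h : ParSum C) {x x' y y' a b : C}
    (hx : DisjSupp x x') (hy : DisjSupp y y') (hx' : DisjSupp x' x) (hy' : DisjSupp y' y)
    (f : x ⟶ y) (g : x' ⟶ y')
    (ea : a = h.add x x') (eb : b = h.add y y') :
    gadd h hx hy f g ea eb =
      gadd h hx' hy' g f (ea.trans (h.add_comm' hx)) (eb.trans (h.add_comm' hy)) := by
  subst ea; subst eb
  simp only [gadd, h.addHom_comm hx hy hx' hy' f g]
  simp

lemma addHom_gadd (h : ParSum C) {x x' y y' : C} (hx : DisjSupp x x') (hy : DisjSupp y y')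
    (f : x ⟶ y) (g : x' ⟶ y') :
    h.addHom hx hy f g = gadd h hx hy f g rfl rfl := by
  simp [gadd]

lemma addHom_comp_eqToHom (h : ParSum C) {x x' y y' b : C} (hx : DisjSupp x x')
    (hy : DisjSupp y y') (f : x ⟶ y) (g : x' ⟶ y') (e : h.add y y' = b) :
    h.addHom hx hy f g ≫ eqToHom e = gadd h hx hy f g rfl e.symm := by
  simp [gadd]

lemma eqToHom_comp_addHom (h : ParSum C) {x x' y y' a : C} (hx : DisjSupp x x')
    (hy : DisjSupp y y') (f : x ⟶ y) (g : x' ⟶ y') (e : a = h.add x x') :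
    eqToHom e ≫ h.addHom hx hy f g = gadd h hx hy f g e rfl := by
  simp [gadd]

lemma eqToHom_comp_gadd (h : ParSum C) {x x' y y' a a' b : C} (hx : DisjSupp x x')
    (hy : DisjSupp y y') (f : x ⟶ y) (g : x' ⟶ y') (e : a' = a)
    (ea : a = h.add x x') (eb : b = h.add y y') :
    eqToHom e ≫ gadd h hx hy f g ea eb = gadd h hx hy f g (e.trans ea) eb := by
  subst e; simp

lemma gadd_comp_eqToHom (h : ParSum C) {x x' y y' a b b' : C} (hx : DisjSupp x x')
    (hy : DisjSupp y y') (f : x ⟶ y) (g : x' ⟶ y') (e : b = b')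
    (ea : a = h.add x x') (eb : b = h.add y y') :
    gadd h hx hy f g ea eb ≫ eqToHom e = gadd h hx hy f g ea (e.symm.trans eb) := by
  subst e; simp

lemma gadd_zero_right (h : ParSum C) {x y a b : C}
    (hx : DisjSupp x h.zero) (hy : DisjSupp y h.zero) (f : x ⟶ y)
    (ea : a = h.add x h.zero) (eb : b = h.add y h.zero) :
    gadd h hx hy f (𝟙 h.zero) ea eb =
      eqToHom (ea.trans (h.add_zero' x)) ≫ f ≫ eqToHom ((h.add_zero' y).symm.trans eb.symm) := by
  subst ea; subst eb
  simp only [gadd, h.addHom_zero hx hy f]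
  simp

lemma gadd_zero_left (h : ParSum C) {x y a b : C}
    (hx : DisjSupp h.zero x) (hy : DisjSupp h.zero y) (f : x ⟶ y)
    (ea : a = h.add h.zero x) (eb : b = h.add h.zero y) :
    gadd h hx hy (𝟙 h.zero) f ea eb =
      eqToHom (ea.trans (h.zero_add' x)) ≫ f ≫ eqToHom ((h.zero_add' y).symm.trans eb.symm) := by
  subst ea; subst eb
  simp only [gadd, h.zero_addHom hx hy f]
  simp

end ParSum

end AuxGadd

section AuxTwAdd

namespace ParSum

variable {C : Type*} [Category C] [MulAction (Minj ℕ) C]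

lemma ι_add_inv (h : ParSum C) (u : Minj ℕ) {x y : C} (hxy : DisjSupp x y)
    (hu : DisjSupp (u • x) (u • y)) :
    (h.toMCat.ι u (h.add x y)).inv =
      eqToHom (h.smul_add u hxy) ≫
        h.addHom hu hxy (h.toMCat.ι u x).inv (h.toMCat.ι u y).inv := by
  rw [← cancel_epi (h.toMCat.ι u (h.add x y)).hom, Iso.hom_inv_id, h.ι_add u hxy hu]
  simp only [Category.assoc, eqToHom_trans_assoc, eqToHom_refl, Category.id_comp]
  rw [← h.addHom_comp hxy hu hxy (h.toMCat.ι u x).hom (h.toMCat.ι u x).inv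
    (h.toMCat.ι u y).hom (h.toMCat.ι u y).inv]
  simp [h.addHom_id]

lemma tw_add (h : ParSum C) (v u : Minj ℕ) {x y : C} (hxy : DisjSupp x y)
    (hu : DisjSupp (u • x) (u • y)) (hv : DisjSupp (v • x) (v • y)) :
    h.toMCat.tw v u (h.add x y) =
      eqToHom (h.smul_add u hxy) ≫
        h.addHom hu hv (h.toMCat.tw v u x) (h.toMCat.tw v u y) ≫
        eqToHom (h.smul_add v hxy).symm := by
  simp only [MCat.tw, h.ι_add v hxy hv, h.ι_add_inv u hxy hu]
  rw [Category.assoc, ← Category.assoc (h.addHom hu hxy (h.toMCat.ι u x).inv (h.toMCat.ι u y).inv)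
    (h.addHom hxy hv (h.toMCat.ι v x).hom (h.toMCat.ι v y).hom) (eqToHom (h.smul_add v hxy).symm)]
  rw [← h.addHom_comp hu hxy hv (h.toMCat.ι u x).inv (h.toMCat.ι v x).hom
    (h.toMCat.ι u y).inv (h.toMCat.ι v y).hom]

lemma addHom_comp_gadd (h : ParSum C) {x x' y y' z z' b : C}
    (hx : DisjSupp x x') (hy hy2 : DisjSupp y y') (hz : DisjSupp z z')
    (f : x ⟶ y) (g : x' ⟶ y') (f' : y ⟶ z) (g' : y' ⟶ z')
    (ea : h.add y y' = h.add y y') (eb : b = h.add z z') :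
    h.addHom hx hy f g ≫ gadd h hy2 hz f' g' ea eb =
      gadd h hx hz (f ≫ f') (g ≫ g') rfl eb := by
  obtain rfl : hy = hy2 := rfl
  subst eb
  simp only [gadd, eqToHom_refl, Category.id_comp, Category.comp_id,
    h.addHom_comp hx hy hz f f' g g']

end ParSum

end AuxTwAdd

/-- For two injections `φ, ψ : {1,2} × ℕ → ℕ`, the identity functor of `C` together with
the isomorphisms `[ψ,φ]^{x,y}` and the identity of `0` is a strong symmetric monoidal
functor `φ^*(C) → ψ^*(C)`: the isomorphisms `[ψ,φ]` are compatible with the unit,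
associativity and symmetry isomorphisms of the two symmetric monoidal structures. -/
theorem stmt3 (C : Type*) [Category C] [MulAction (Minj ℕ) C] (h : ParSum C)
    (φ : Fin 2 × ℕ → ℕ) (hφ : Function.Injective φ)
    (ψ : Fin 2 × ℕ → ℕ) (hψ : Function.Injective ψ) :
    -- compatibility with the right unit isomorphisms
    (∀ x : C, rightUnitor h φ hφ x ≫ mixTw h φ hφ ψ hψ x h.zero = rightUnitor h ψ hψ x) ∧
    -- compatibility with the left unit isomorphisms
    (∀ x : C, leftUnitor h φ hφ x ≫ mixTw h φ hφ ψ hψ h.zero x = leftUnitor h ψ hψ x) ∧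
    -- compatibility with the associativity isomorphisms
    (∀ x y z : C,
      mixTw h φ hφ ψ hψ (Fobj h φ hφ x y) z ≫
          Fhom h ψ hψ (mixTw h φ hφ ψ hψ x y) (𝟙 z) ≫ phiAssociator h ψ hψ x y z =
        phiAssociator h φ hφ x y z ≫ mixTw h φ hφ ψ hψ x (Fobj h φ hφ y z) ≫
          Fhom h ψ hψ (𝟙 x) (mixTw h φ hφ ψ hψ y z)) ∧
    -- compatibility with the symmetry isomorphisms
    (∀ x y : C,
      mixTw h φ hφ ψ hψ x y ≫ braiding h ψ hψ x y =
        braiding h φ hφ x y ≫ mixTw h φ hφ ψ hψ y x) := by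
  refine ⟨fun x => ?_, fun x => ?_, fun x y z => ?_, fun x y => ?_⟩
  · -- right unitor
    simp only [rightUnitor, mixTw]
    rw [h.tw_zero (phiC ψ hψ 1) (phiC φ hφ 1)]
    rw [show (eqToHom ((h.smul_zero' (phiC φ hφ 1)).trans (h.smul_zero' (phiC ψ hψ 1)).symm) :
        phiC φ hφ 1 • h.zero ⟶ phiC ψ hψ 1 • h.zero) =
        eqToHom (h.smul_zero' (phiC φ hφ 1)) ≫ 𝟙 h.zero ≫
          eqToHom (h.smul_zero' (phiC ψ hψ 1)).symm by simp]
    rw [h.addHom_cast_right (d12 h φ hφ x h.zero) (d12 h ψ hψ x h.zero)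
      (h.disj_zero_right _) (h.disj_zero_right _)
      (h.smul_zero' (phiC φ hφ 1)) (h.smul_zero' (phiC ψ hψ 1)).symm
      (h.toMCat.tw (phiC ψ hψ 0) (phiC φ hφ 0) x) (𝟙 h.zero)]
    rw [h.addHom_zero (h.disj_zero_right _) (h.disj_zero_right _)
      (h.toMCat.tw (phiC ψ hψ 0) (phiC φ hφ 0) x)]
    delta Fobj
    simp [MCat.tw]
    erw [eqToHom_trans_assoc]
    simp
  · -- left unitor
    simp only [leftUnitor, mixTw]
    rw [h.tw_zero (phiC ψ hψ 0) (phiC φ hφ 0)]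
    rw [show (eqToHom ((h.smul_zero' (phiC φ hφ 0)).trans (h.smul_zero' (phiC ψ hψ 0)).symm) :
        phiC φ hφ 0 • h.zero ⟶ phiC ψ hψ 0 • h.zero) =
        eqToHom (h.smul_zero' (phiC φ hφ 0)) ≫ 𝟙 h.zero ≫
          eqToHom (h.smul_zero' (phiC ψ hψ 0)).symm by simp]
    rw [h.addHom_cast_left (d12 h φ hφ h.zero x) (d12 h ψ hψ h.zero x)
      (h.disj_zero_left _) (h.disj_zero_left _)
      (h.smul_zero' (phiC φ hφ 0)) (h.smul_zero' (phiC ψ hψ 0)).symm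
      (𝟙 h.zero) (h.toMCat.tw (phiC ψ hψ 1) (phiC φ hφ 1) x)]
    rw [h.zero_addHom (h.disj_zero_left _) (h.disj_zero_left _)
      (h.toMCat.tw (phiC ψ hψ 1) (phiC φ hφ 1) x)]
    delta Fobj
    simp [MCat.tw]
    erw [eqToHom_trans_assoc]
    simp
  · -- associator
    have Rφ : Disjoint (Set.range ⇑(phiC φ hφ 0)) (Set.range ⇑(phiC φ hφ 1)) := disjoint_phiC_ranges φ hφ
    have Rψ : Disjoint (Set.range ⇑(phiC ψ hψ 0)) (Set.range ⇑(phiC ψ hψ 1)) := disjoint_phiC_ranges ψ hψ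
    have pBt : DisjSupp (((phiC ψ hψ 0) * (phiC φ hφ 0)) • x) (((phiC ψ hψ 0) * (phiC φ hφ 1)) • y) :=
      h.disj_smul (range_mul_disjoint (phiC ψ hψ 0) Rφ) x y
    have pFt : DisjSupp (((phiC ψ hψ 1) * (phiC φ hφ 0)) • y) (((phiC ψ hψ 1) * (phiC φ hφ 1)) • z) :=
      h.disj_smul (range_mul_disjoint (phiC ψ hψ 1) Rφ) y z
    have DB : DisjSupp (h.add (((phiC ψ hψ 0) * (phiC φ hφ 0)) • x) (((phiC ψ hψ 0) * (phiC φ hφ 1)) • y)) ((phiC ψ hψ 1) • z) :=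
      h.disj_add_smul (Rψ.mono_left (range_mul_subset (phiC ψ hψ 0) (phiC φ hφ 0)))
        (Rψ.mono_left (range_mul_subset (phiC ψ hψ 0) (phiC φ hφ 1))) (range_mul_disjoint (phiC ψ hψ 0) Rφ) x y z
    have DF : DisjSupp ((phiC ψ hψ 0) • x) (h.add (((phiC ψ hψ 1) * (phiC φ hφ 0)) • y) (((phiC ψ hψ 1) * (phiC φ hφ 1)) • z)) :=
      h.disj_smul_add (Rψ.mono_right (range_mul_subset (phiC ψ hψ 1) (phiC φ hφ 0)))
        (Rψ.mono_right (range_mul_subset (phiC ψ hψ 1) (phiC φ hφ 1))) (range_mul_disjoint (phiC ψ hψ 1) Rφ) x y z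
    have EA1 : (phiC φ hφ 0) • h.add ((phiC φ hφ 0) • x) ((phiC φ hφ 1) • y) = h.add (((phiC φ hφ 0) * (phiC φ hφ 0)) • x) (((phiC φ hφ 0) * (phiC φ hφ 1)) • y) := by
      rw [h.smul_add (phiC φ hφ 0) (d12 h φ hφ x y), mul_smul, mul_smul]
    have EA2 : h.add (((phiC ψ hψ 0) * (phiC φ hφ 0)) • x) (((phiC ψ hψ 0) * (phiC φ hφ 1)) • y) = (phiC ψ hψ 0) • h.add ((phiC φ hφ 0) • x) ((phiC φ hφ 1) • y) := by
      rw [h.smul_add (phiC ψ hψ 0) (d12 h φ hφ x y), mul_smul, mul_smul]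
    have EA3 : h.add (((phiC ψ hψ 0) * (phiC ψ hψ 0)) • x) (((phiC ψ hψ 0) * (phiC ψ hψ 1)) • y) = (phiC ψ hψ 0) • h.add ((phiC ψ hψ 0) • x) ((phiC ψ hψ 1) • y) := by
      rw [h.smul_add (phiC ψ hψ 0) (d12 h ψ hψ x y), mul_smul, mul_smul]
    have EB1 : (phiC φ hφ 1) • h.add ((phiC φ hφ 0) • y) ((phiC φ hφ 1) • z) = h.add (((phiC φ hφ 1) * (phiC φ hφ 0)) • y) (((phiC φ hφ 1) * (phiC φ hφ 1)) • z) := by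
      rw [h.smul_add (phiC φ hφ 1) (d12 h φ hφ y z), mul_smul, mul_smul]
    have EB2 : h.add (((phiC ψ hψ 1) * (phiC φ hφ 0)) • y) (((phiC ψ hψ 1) * (phiC φ hφ 1)) • z) = (phiC ψ hψ 1) • h.add ((phiC φ hφ 0) • y) ((phiC φ hφ 1) • z) := by
      rw [h.smul_add (phiC ψ hψ 1) (d12 h φ hφ y z), mul_smul, mul_smul]
    have EB3 : h.add (((phiC ψ hψ 1) * (phiC ψ hψ 0)) • y) (((phiC ψ hψ 1) * (phiC ψ hψ 1)) • z) = (phiC ψ hψ 1) • h.add ((phiC ψ hψ 0) • y) ((phiC ψ hψ 1) • z) := by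
      rw [h.smul_add (phiC ψ hψ 1) (d12 h ψ hψ y z), mul_smul, mul_smul]
    simp only [mixTw, Fhom, phiAssociator, MCat.act_id]
    delta Fobj
    -- expand the two act-blocks
    rw [h.act_add (phiC ψ hψ 0) (d12 h φ hφ x y) (d12 h ψ hψ x y)
      (h.disjsupp_smul (phiC ψ hψ 0) (d12 h φ hφ x y)) (h.disjsupp_smul (phiC ψ hψ 0) (d12 h ψ hψ x y))
      (h.toMCat.tw (phiC ψ hψ 0) (phiC φ hφ 0) x) (h.toMCat.tw (phiC ψ hψ 1) (phiC φ hφ 1) y)]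
    rw [h.act_add (phiC ψ hψ 1) (d12 h φ hφ y z) (d12 h ψ hψ y z)
      (h.disjsupp_smul (phiC ψ hψ 1) (d12 h φ hφ y z)) (h.disjsupp_smul (phiC ψ hψ 1) (d12 h ψ hψ y z))
      (h.toMCat.tw (phiC ψ hψ 0) (phiC φ hφ 0) y) (h.toMCat.tw (phiC ψ hψ 1) (phiC φ hφ 1) z)]
    rw [h.toMCat.act_tw (phiC ψ hψ 0) (phiC ψ hψ 0) (phiC φ hφ 0) x, h.toMCat.act_tw (phiC ψ hψ 0) (phiC ψ hψ 1) (phiC φ hφ 1) y,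
        h.toMCat.act_tw (phiC ψ hψ 1) (phiC ψ hψ 0) (phiC φ hφ 0) y, h.toMCat.act_tw (phiC ψ hψ 1) (phiC ψ hψ 1) (phiC φ hφ 1) z]
    -- expand the two tw's at sum objects
    rw [h.tw_add (phiC ψ hψ 0) (phiC φ hφ 0) (d12 h φ hφ x y)
      (h.disjsupp_smul (phiC φ hφ 0) (d12 h φ hφ x y)) (h.disjsupp_smul (phiC ψ hψ 0) (d12 h φ hφ x y))]
    rw [h.tw_add (phiC ψ hψ 1) (phiC φ hφ 1) (d12 h φ hφ y z)
      (h.disjsupp_smul (phiC φ hφ 1) (d12 h φ hφ y z)) (h.disjsupp_smul (phiC ψ hψ 1) (d12 h φ hφ y z))]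
    rw [h.toMCat.tw_smul (phiC ψ hψ 0) (phiC φ hφ 0) (phiC φ hφ 0) x, h.toMCat.tw_smul (phiC ψ hψ 0) (phiC φ hφ 0) (phiC φ hφ 1) y,
        h.toMCat.tw_smul (phiC ψ hψ 1) (phiC φ hφ 1) (phiC φ hφ 0) y, h.toMCat.tw_smul (phiC ψ hψ 1) (phiC φ hφ 1) (phiC φ hφ 1) z]
    simp only [Category.assoc, Category.id_comp, Category.comp_id,
      eqToHom_trans, eqToHom_trans_assoc, eqToHom_refl]
    -- pull casts out of the four inner addHoms
    rw [h.addHom_cast (h.disjsupp_smul (phiC φ hφ 0) (d12 h φ hφ x y)) (h.disjsupp_smul (phiC ψ hψ 0) (d12 h φ hφ x y))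
      (d00_01 h φ hφ x y) pBt
      (mul_smul (phiC φ hφ 0) (phiC φ hφ 0) x).symm (mul_smul (phiC ψ hψ 0) (phiC φ hφ 0) x) (mul_smul (phiC φ hφ 0) (phiC φ hφ 1) y).symm (mul_smul (phiC ψ hψ 0) (phiC φ hφ 1) y)
      (h.toMCat.tw ((phiC ψ hψ 0) * (phiC φ hφ 0)) ((phiC φ hφ 0) * (phiC φ hφ 0)) x) (h.toMCat.tw ((phiC ψ hψ 0) * (phiC φ hφ 1)) ((phiC φ hφ 0) * (phiC φ hφ 1)) y)]
    rw [h.addHom_cast (h.disjsupp_smul (phiC ψ hψ 0) (d12 h φ hφ x y)) (h.disjsupp_smul (phiC ψ hψ 0) (d12 h ψ hψ x y))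
      pBt (d00_01 h ψ hψ x y)
      (mul_smul (phiC ψ hψ 0) (phiC φ hφ 0) x).symm (mul_smul (phiC ψ hψ 0) (phiC ψ hψ 0) x) (mul_smul (phiC ψ hψ 0) (phiC φ hφ 1) y).symm (mul_smul (phiC ψ hψ 0) (phiC ψ hψ 1) y)
      (h.toMCat.tw ((phiC ψ hψ 0) * (phiC ψ hψ 0)) ((phiC ψ hψ 0) * (phiC φ hφ 0)) x) (h.toMCat.tw ((phiC ψ hψ 0) * (phiC ψ hψ 1)) ((phiC ψ hψ 0) * (phiC φ hφ 1)) y)]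
    rw [h.addHom_cast (h.disjsupp_smul (phiC φ hφ 1) (d12 h φ hφ y z)) (h.disjsupp_smul (phiC ψ hψ 1) (d12 h φ hφ y z))
      (d10_11 h φ hφ y z) pFt
      (mul_smul (phiC φ hφ 1) (phiC φ hφ 0) y).symm (mul_smul (phiC ψ hψ 1) (phiC φ hφ 0) y) (mul_smul (phiC φ hφ 1) (phiC φ hφ 1) z).symm (mul_smul (phiC ψ hψ 1) (phiC φ hφ 1) z)
      (h.toMCat.tw ((phiC ψ hψ 1) * (phiC φ hφ 0)) ((phiC φ hφ 1) * (phiC φ hφ 0)) y) (h.toMCat.tw ((phiC ψ hψ 1) * (phiC φ hφ 1)) ((phiC φ hφ 1) * (phiC φ hφ 1)) z)]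
    rw [h.addHom_cast (h.disjsupp_smul (phiC ψ hψ 1) (d12 h φ hφ y z)) (h.disjsupp_smul (phiC ψ hψ 1) (d12 h ψ hψ y z))
      pFt (d10_11 h ψ hψ y z)
      (mul_smul (phiC ψ hψ 1) (phiC φ hφ 0) y).symm (mul_smul (phiC ψ hψ 1) (phiC ψ hψ 0) y) (mul_smul (phiC ψ hψ 1) (phiC φ hφ 1) z).symm (mul_smul (phiC ψ hψ 1) (phiC ψ hψ 1) z)
      (h.toMCat.tw ((phiC ψ hψ 1) * (phiC ψ hψ 0)) ((phiC ψ hψ 1) * (phiC φ hφ 0)) y) (h.toMCat.tw ((phiC ψ hψ 1) * (phiC ψ hψ 1)) ((phiC ψ hψ 1) * (phiC φ hφ 1)) z)]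
    simp only [Category.assoc, eqToHom_trans, eqToHom_trans_assoc, eqToHom_refl,
      Category.id_comp, Category.comp_id]
    -- outer pulls
    rw [h.addHom_cast_left (d12 h φ hφ (h.add ((phiC φ hφ 0) • x) ((phiC φ hφ 1) • y)) z)
      (d12 h ψ hψ (h.add ((phiC φ hφ 0) • x) ((phiC φ hφ 1) • y)) z) (dI1 h φ hφ x y z) DB EA1 EA2
      (h.addHom (d00_01 h φ hφ x y) pBt (h.toMCat.tw ((phiC ψ hψ 0) * (phiC φ hφ 0)) ((phiC φ hφ 0) * (phiC φ hφ 0)) x) (h.toMCat.tw ((phiC ψ hψ 0) * (phiC φ hφ 1)) ((phiC φ hφ 0) * (phiC φ hφ 1)) y))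
      (h.toMCat.tw (phiC ψ hψ 1) (phiC φ hφ 1) z)]
    rw [h.addHom_cast_left (d12 h ψ hψ (h.add ((phiC φ hφ 0) • x) ((phiC φ hφ 1) • y)) z)
      (d12 h ψ hψ (h.add ((phiC ψ hψ 0) • x) ((phiC ψ hψ 1) • y)) z) DB (dI1 h ψ hψ x y z) EA2.symm EA3
      (h.addHom pBt (d00_01 h ψ hψ x y) (h.toMCat.tw ((phiC ψ hψ 0) * (phiC ψ hψ 0)) ((phiC ψ hψ 0) * (phiC φ hφ 0)) x) (h.toMCat.tw ((phiC ψ hψ 0) * (phiC ψ hψ 1)) ((phiC ψ hψ 0) * (phiC φ hφ 1)) y))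
      (𝟙 ((phiC ψ hψ 1) • z))]
    rw [h.addHom_cast_right (d12 h φ hφ x (h.add ((phiC φ hφ 0) • y) ((phiC φ hφ 1) • z)))
      (d12 h ψ hψ x (h.add ((phiC φ hφ 0) • y) ((phiC φ hφ 1) • z))) (dI3 h φ hφ x y z) DF EB1 EB2
      (h.toMCat.tw (phiC ψ hψ 0) (phiC φ hφ 0) x)
      (h.addHom (d10_11 h φ hφ y z) pFt (h.toMCat.tw ((phiC ψ hψ 1) * (phiC φ hφ 0)) ((phiC φ hφ 1) * (phiC φ hφ 0)) y) (h.toMCat.tw ((phiC ψ hψ 1) * (phiC φ hφ 1)) ((phiC φ hφ 1) * (phiC φ hφ 1)) z))]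
    rw [h.addHom_cast_right (d12 h ψ hψ x (h.add ((phiC φ hφ 0) • y) ((phiC φ hφ 1) • z)))
      (d12 h ψ hψ x (h.add ((phiC ψ hψ 0) • y) ((phiC ψ hψ 1) • z))) DF (dI3 h ψ hψ x y z) EB2.symm EB3
      (𝟙 ((phiC ψ hψ 0) • x))
      (h.addHom pFt (d10_11 h ψ hψ y z) (h.toMCat.tw ((phiC ψ hψ 1) * (phiC ψ hψ 0)) ((phiC ψ hψ 1) * (phiC φ hφ 0)) y) (h.toMCat.tw ((phiC ψ hψ 1) * (phiC ψ hψ 1)) ((phiC ψ hψ 1) * (phiC φ hφ 1)) z))]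
    simp only [Category.assoc, eqToHom_trans, eqToHom_trans_assoc, eqToHom_refl,
      Category.id_comp, Category.comp_id]
    erw [eqToHom_trans_assoc, eqToHom_trans_assoc]
    simp only [eqToHom_refl, Category.id_comp]
    have PSI : h.add (h.add ((phiC ψ hψ 0) • x) (((phiC ψ hψ 1) * (phiC ψ hψ 0)) • y)) (((phiC ψ hψ 1) * (phiC ψ hψ 1)) • z) =
        h.add (phiC ψ hψ 0 • x) (phiC ψ hψ 1 • h.add (phiC ψ hψ 0 • y) (phiC ψ hψ 1 • z)) :=
      (assocMid_eq h ψ hψ x y z).trans (assocTgt_eq h ψ hψ x y z).symm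
    have EL : h.add ((phiC φ hφ 0) • h.add ((phiC φ hφ 0) • x) ((phiC φ hφ 1) • y)) ((phiC φ hφ 1) • z) =
        h.add (h.add (((phiC φ hφ 0) * (phiC φ hφ 0)) • x) (((phiC φ hφ 0) * (phiC φ hφ 1)) • y)) ((phiC φ hφ 1) • z) := by rw [EA1]
    have ER : h.add ((phiC ψ hψ 0) • x) (h.add (((phiC ψ hψ 1) * (phiC ψ hψ 0)) • y) (((phiC ψ hψ 1) * (phiC ψ hψ 1)) • z)) =
        h.add ((phiC ψ hψ 0) • x) ((phiC ψ hψ 1) • h.add ((phiC ψ hψ 0) • y) ((phiC ψ hψ 1) • z)) := by rw [EB3]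
    have EM : h.add (h.add ((phiC φ hφ 0) • x) (((phiC φ hφ 1) * (phiC φ hφ 0)) • y)) (((phiC φ hφ 1) * (phiC φ hφ 1)) • z) =
        h.add ((phiC φ hφ 0) • x) (h.add (((phiC φ hφ 1) * (phiC φ hφ 0)) • y) (((phiC φ hφ 1) * (phiC φ hφ 1)) • z)) :=
      h.add_assoc' (d0_10 h φ hφ x y) (d10_11 h φ hφ y z) (d0_11 h φ hφ x z)
    -- fuse the left-hand side
    rw [h.addHom_comp_eqToHom (dI1 h ψ hψ x y z) (dI2 h ψ hψ x y z)
      (h.addHom (d00_01 h ψ hψ x y) (d0_10 h ψ hψ x y) (h.toMCat.tw (phiC ψ hψ 0) ((phiC ψ hψ 0) * (phiC ψ hψ 0)) x)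
        (h.toMCat.tw ((phiC ψ hψ 1) * (phiC ψ hψ 0)) ((phiC ψ hψ 0) * (phiC ψ hψ 1)) y)) (h.toMCat.tw ((phiC ψ hψ 1) * (phiC ψ hψ 1)) (phiC ψ hψ 1) z) PSI]
    rw [h.addHom_comp_gadd DB (dI1 h ψ hψ x y z) (dI1 h ψ hψ x y z) (dI2 h ψ hψ x y z)
      (h.addHom pBt (d00_01 h ψ hψ x y) (h.toMCat.tw ((phiC ψ hψ 0) * (phiC ψ hψ 0)) ((phiC ψ hψ 0) * (phiC φ hφ 0)) x) (h.toMCat.tw ((phiC ψ hψ 0) * (phiC ψ hψ 1)) ((phiC ψ hψ 0) * (phiC φ hφ 1)) y))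
      (𝟙 ((phiC ψ hψ 1) • z))
      (h.addHom (d00_01 h ψ hψ x y) (d0_10 h ψ hψ x y) (h.toMCat.tw (phiC ψ hψ 0) ((phiC ψ hψ 0) * (phiC ψ hψ 0)) x)
        (h.toMCat.tw ((phiC ψ hψ 1) * (phiC ψ hψ 0)) ((phiC ψ hψ 0) * (phiC ψ hψ 1)) y)) (h.toMCat.tw ((phiC ψ hψ 1) * (phiC ψ hψ 1)) (phiC ψ hψ 1) z) rfl PSI.symm]
    simp only [Category.id_comp, Category.comp_id]
    rw [← h.addHom_comp pBt (d00_01 h ψ hψ x y) (d0_10 h ψ hψ x y)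
      (h.toMCat.tw ((phiC ψ hψ 0) * (phiC ψ hψ 0)) ((phiC ψ hψ 0) * (phiC φ hφ 0)) x) (h.toMCat.tw (phiC ψ hψ 0) ((phiC ψ hψ 0) * (phiC ψ hψ 0)) x)
      (h.toMCat.tw ((phiC ψ hψ 0) * (phiC ψ hψ 1)) ((phiC ψ hψ 0) * (phiC φ hφ 1)) y) (h.toMCat.tw ((phiC ψ hψ 1) * (phiC ψ hψ 0)) ((phiC ψ hψ 0) * (phiC ψ hψ 1)) y)]
    rw [h.toMCat.tw_tw (phiC ψ hψ 0) ((phiC ψ hψ 0) * (phiC ψ hψ 0)) ((phiC ψ hψ 0) * (phiC φ hφ 0)) x, h.toMCat.tw_tw ((phiC ψ hψ 1) * (phiC ψ hψ 0)) ((phiC ψ hψ 0) * (phiC ψ hψ 1)) ((phiC ψ hψ 0) * (phiC φ hφ 1)) y]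
    rw [h.addHom_comp_gadd (dI1 h φ hφ x y z) DB DB (dI2 h ψ hψ x y z)
      (h.addHom (d00_01 h φ hφ x y) pBt (h.toMCat.tw ((phiC ψ hψ 0) * (phiC φ hφ 0)) ((phiC φ hφ 0) * (phiC φ hφ 0)) x) (h.toMCat.tw ((phiC ψ hψ 0) * (phiC φ hφ 1)) ((phiC φ hφ 0) * (phiC φ hφ 1)) y))
      (h.toMCat.tw (phiC ψ hψ 1) (phiC φ hφ 1) z)
      (h.addHom pBt (d0_10 h ψ hψ x y) (h.toMCat.tw (phiC ψ hψ 0) ((phiC ψ hψ 0) * (phiC φ hφ 0)) x) (h.toMCat.tw ((phiC ψ hψ 1) * (phiC ψ hψ 0)) ((phiC ψ hψ 0) * (phiC φ hφ 1)) y))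
      (h.toMCat.tw ((phiC ψ hψ 1) * (phiC ψ hψ 1)) (phiC ψ hψ 1) z) rfl PSI.symm]
    rw [← h.addHom_comp (d00_01 h φ hφ x y) pBt (d0_10 h ψ hψ x y)
      (h.toMCat.tw ((phiC ψ hψ 0) * (phiC φ hφ 0)) ((phiC φ hφ 0) * (phiC φ hφ 0)) x) (h.toMCat.tw (phiC ψ hψ 0) ((phiC ψ hψ 0) * (phiC φ hφ 0)) x)
      (h.toMCat.tw ((phiC ψ hψ 0) * (phiC φ hφ 1)) ((phiC φ hφ 0) * (phiC φ hφ 1)) y) (h.toMCat.tw ((phiC ψ hψ 1) * (phiC ψ hψ 0)) ((phiC ψ hψ 0) * (phiC φ hφ 1)) y)]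
    rw [h.toMCat.tw_tw (phiC ψ hψ 0) ((phiC ψ hψ 0) * (phiC φ hφ 0)) ((phiC φ hφ 0) * (phiC φ hφ 0)) x, h.toMCat.tw_tw ((phiC ψ hψ 1) * (phiC ψ hψ 0)) ((phiC ψ hψ 0) * (phiC φ hφ 1)) ((phiC φ hφ 0) * (phiC φ hφ 1)) y,
        h.toMCat.tw_tw ((phiC ψ hψ 1) * (phiC ψ hψ 1)) (phiC ψ hψ 1) (phiC φ hφ 1) z]
    rw [h.eqToHom_comp_gadd (dI1 h φ hφ x y z) (dI2 h ψ hψ x y z)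
      (h.addHom (d00_01 h φ hφ x y) (d0_10 h ψ hψ x y) (h.toMCat.tw (phiC ψ hψ 0) ((phiC φ hφ 0) * (phiC φ hφ 0)) x)
        (h.toMCat.tw ((phiC ψ hψ 1) * (phiC ψ hψ 0)) ((phiC φ hφ 0) * (phiC φ hφ 1)) y)) (h.toMCat.tw ((phiC ψ hψ 1) * (phiC ψ hψ 1)) (phiC φ hφ 1) z) EL rfl PSI.symm]
    -- fuse the right-hand side
    rw [h.addHom_comp_eqToHom DF (dI3 h ψ hψ x y z) (𝟙 ((phiC ψ hψ 0) • x))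
      (h.addHom pFt (d10_11 h ψ hψ y z) (h.toMCat.tw ((phiC ψ hψ 1) * (phiC ψ hψ 0)) ((phiC ψ hψ 1) * (phiC φ hφ 0)) y) (h.toMCat.tw ((phiC ψ hψ 1) * (phiC ψ hψ 1)) ((phiC ψ hψ 1) * (phiC φ hφ 1)) z)) ER]
    rw [h.addHom_comp_gadd (dI3 h φ hφ x y z) DF DF (dI3 h ψ hψ x y z)
      (h.toMCat.tw (phiC ψ hψ 0) (phiC φ hφ 0) x)
      (h.addHom (d10_11 h φ hφ y z) pFt (h.toMCat.tw ((phiC ψ hψ 1) * (phiC φ hφ 0)) ((phiC φ hφ 1) * (phiC φ hφ 0)) y) (h.toMCat.tw ((phiC ψ hψ 1) * (phiC φ hφ 1)) ((phiC φ hφ 1) * (phiC φ hφ 1)) z))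
      (𝟙 ((phiC ψ hψ 0) • x))
      (h.addHom pFt (d10_11 h ψ hψ y z) (h.toMCat.tw ((phiC ψ hψ 1) * (phiC ψ hψ 0)) ((phiC ψ hψ 1) * (phiC φ hφ 0)) y) (h.toMCat.tw ((phiC ψ hψ 1) * (phiC ψ hψ 1)) ((phiC ψ hψ 1) * (phiC φ hφ 1)) z))
      rfl ER.symm]
    simp only [Category.id_comp, Category.comp_id]
    rw [← h.addHom_comp (d10_11 h φ hφ y z) pFt (d10_11 h ψ hψ y z)
      (h.toMCat.tw ((phiC ψ hψ 1) * (phiC φ hφ 0)) ((phiC φ hφ 1) * (phiC φ hφ 0)) y) (h.toMCat.tw ((phiC ψ hψ 1) * (phiC ψ hψ 0)) ((phiC ψ hψ 1) * (phiC φ hφ 0)) y)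
      (h.toMCat.tw ((phiC ψ hψ 1) * (phiC φ hφ 1)) ((phiC φ hφ 1) * (phiC φ hφ 1)) z) (h.toMCat.tw ((phiC ψ hψ 1) * (phiC ψ hψ 1)) ((phiC ψ hψ 1) * (phiC φ hφ 1)) z)]
    rw [h.toMCat.tw_tw ((phiC ψ hψ 1) * (phiC ψ hψ 0)) ((phiC ψ hψ 1) * (phiC φ hφ 0)) ((phiC φ hφ 1) * (phiC φ hφ 0)) y, h.toMCat.tw_tw ((phiC ψ hψ 1) * (phiC ψ hψ 1)) ((phiC ψ hψ 1) * (phiC φ hφ 1)) ((phiC φ hφ 1) * (phiC φ hφ 1)) z]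
    rw [h.eqToHom_comp_gadd (dI3 h φ hφ x y z) (dI3 h ψ hψ x y z) (h.toMCat.tw (phiC ψ hψ 0) (phiC φ hφ 0) x)
      (h.addHom (d10_11 h φ hφ y z) (d10_11 h ψ hψ y z) (h.toMCat.tw ((phiC ψ hψ 1) * (phiC ψ hψ 0)) ((phiC φ hφ 1) * (phiC φ hφ 0)) y)
        (h.toMCat.tw ((phiC ψ hψ 1) * (phiC ψ hψ 1)) ((phiC φ hφ 1) * (phiC φ hφ 1)) z)) EM rfl ER.symm]
    rw [h.gadd_assoc (d0_10 h φ hφ x y) (d10_11 h φ hφ y z) (d0_11 h φ hφ x z)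
      (d0_10 h ψ hψ x y) (d10_11 h ψ hψ y z) (d0_11 h ψ hψ x z)
      (dI2 h φ hφ x y z) (dI2 h ψ hψ x y z) (dI3 h φ hφ x y z) (dI3 h ψ hψ x y z)
      (h.toMCat.tw (phiC ψ hψ 0) (phiC φ hφ 0) x) (h.toMCat.tw ((phiC ψ hψ 1) * (phiC ψ hψ 0)) ((phiC φ hφ 1) * (phiC φ hφ 0)) y) (h.toMCat.tw ((phiC ψ hψ 1) * (phiC ψ hψ 1)) ((phiC φ hφ 1) * (phiC φ hφ 1)) z)
      (EM.trans rfl) ER.symm]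
    rw [h.addHom_comp_gadd (dI1 h φ hφ x y z) (dI2 h φ hφ x y z) (dI2 h φ hφ x y z)
      (dI2 h ψ hψ x y z)
      (h.addHom (d00_01 h φ hφ x y) (d0_10 h φ hφ x y) (h.toMCat.tw (phiC φ hφ 0) ((phiC φ hφ 0) * (phiC φ hφ 0)) x)
        (h.toMCat.tw ((phiC φ hφ 1) * (phiC φ hφ 0)) ((phiC φ hφ 0) * (phiC φ hφ 1)) y)) (h.toMCat.tw ((phiC φ hφ 1) * (phiC φ hφ 1)) (phiC φ hφ 1) z)
      (h.addHom (d0_10 h φ hφ x y) (d0_10 h ψ hψ x y) (h.toMCat.tw (phiC ψ hψ 0) (phiC φ hφ 0) x) (h.toMCat.tw ((phiC ψ hψ 1) * (phiC ψ hψ 0)) ((phiC φ hφ 1) * (phiC φ hφ 0)) y))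
      (h.toMCat.tw ((phiC ψ hψ 1) * (phiC ψ hψ 1)) ((phiC φ hφ 1) * (phiC φ hφ 1)) z)
      ((EM.trans rfl).trans (h.add_assoc' (d0_10 h φ hφ x y) (d10_11 h φ hφ y z)
        (d0_11 h φ hφ x z)).symm)
      (ER.symm.trans (h.add_assoc' (d0_10 h ψ hψ x y) (d10_11 h ψ hψ y z)
        (d0_11 h ψ hψ x z)).symm)]
    rw [← h.addHom_comp (d00_01 h φ hφ x y) (d0_10 h φ hφ x y) (d0_10 h ψ hψ x y)
      (h.toMCat.tw (phiC φ hφ 0) ((phiC φ hφ 0) * (phiC φ hφ 0)) x) (h.toMCat.tw (phiC ψ hψ 0) (phiC φ hφ 0) x) (h.toMCat.tw ((phiC φ hφ 1) * (phiC φ hφ 0)) ((phiC φ hφ 0) * (phiC φ hφ 1)) y) (h.toMCat.tw ((phiC ψ hψ 1) * (phiC ψ hψ 0)) ((phiC φ hφ 1) * (phiC φ hφ 0)) y)]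
    rw [h.toMCat.tw_tw (phiC ψ hψ 0) (phiC φ hφ 0) ((phiC φ hφ 0) * (phiC φ hφ 0)) x, h.toMCat.tw_tw ((phiC ψ hψ 1) * (phiC ψ hψ 0)) ((phiC φ hφ 1) * (phiC φ hφ 0)) ((phiC φ hφ 0) * (phiC φ hφ 1)) y,
        h.toMCat.tw_tw ((phiC ψ hψ 1) * (phiC ψ hψ 1)) ((phiC φ hφ 1) * (phiC φ hφ 1)) (phiC φ hφ 1) z]
    rw [h.eqToHom_comp_gadd (dI1 h φ hφ x y z) (dI2 h ψ hψ x y z)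
      (h.addHom (d00_01 h φ hφ x y) (d0_10 h ψ hψ x y) (h.toMCat.tw (phiC ψ hψ 0) ((phiC φ hφ 0) * (phiC φ hφ 0)) x)
        (h.toMCat.tw ((phiC ψ hψ 1) * (phiC ψ hψ 0)) ((phiC φ hφ 0) * (phiC φ hφ 1)) y)) (h.toMCat.tw ((phiC ψ hψ 1) * (phiC ψ hψ 1)) (phiC φ hφ 1) z) EL rfl
      (ER.symm.trans (h.add_assoc' (d0_10 h ψ hψ x y) (d10_11 h ψ hψ y z)
        (d0_11 h ψ hψ x z)).symm)]

  · -- braiding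
    simp only [mixTw, braiding]
    delta Fobj
    rw [h.addHom_gadd (d12 h φ hφ x y) (d12 h ψ hψ x y)
      (h.toMCat.tw (phiC ψ hψ 0) (phiC φ hφ 0) x) (h.toMCat.tw (phiC ψ hψ 1) (phiC φ hφ 1) y)]
    rw [h.addHom_comp_eqToHom (d12 h ψ hψ x y) (d21 h ψ hψ x y)
      (h.toMCat.tw (phiC ψ hψ 1) (phiC ψ hψ 0) x) (h.toMCat.tw (phiC ψ hψ 0) (phiC ψ hψ 1) y)
      (h.add_comm' (d21 h ψ hψ x y))]
    rw [h.gadd_gadd (d12 h φ hφ x y) (d12 h ψ hψ x y) (d12 h ψ hψ x y) (d21 h ψ hψ x y)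
      (h.toMCat.tw (phiC ψ hψ 0) (phiC φ hφ 0) x) (h.toMCat.tw (phiC ψ hψ 1) (phiC φ hφ 1) y)
      (h.toMCat.tw (phiC ψ hψ 1) (phiC ψ hψ 0) x) (h.toMCat.tw (phiC ψ hψ 0) (phiC ψ hψ 1) y)
      rfl rfl rfl (h.add_comm' (d21 h ψ hψ x y)).symm]
    rw [h.toMCat.tw_tw (phiC ψ hψ 1) (phiC ψ hψ 0) (phiC φ hφ 0) x,
        h.toMCat.tw_tw (phiC ψ hψ 0) (phiC ψ hψ 1) (phiC φ hφ 1) y]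
    rw [h.addHom_comp_eqToHom (d12 h φ hφ x y) (d21 h φ hφ x y)
      (h.toMCat.tw (phiC φ hφ 1) (phiC φ hφ 0) x) (h.toMCat.tw (phiC φ hφ 0) (phiC φ hφ 1) y)
      (h.add_comm' (d21 h φ hφ x y))]
    rw [h.addHom_gadd (d12 h φ hφ y x) (d12 h ψ hψ y x)
      (h.toMCat.tw (phiC ψ hψ 0) (phiC φ hφ 0) y) (h.toMCat.tw (phiC ψ hψ 1) (phiC φ hφ 1) x)]
    rw [h.gadd_comm (d12 h φ hφ y x) (d12 h ψ hψ y x) (d21 h φ hφ x y) (d21 h ψ hψ x y)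
      (h.toMCat.tw (phiC ψ hψ 0) (phiC φ hφ 0) y) (h.toMCat.tw (phiC ψ hψ 1) (phiC φ hφ 1) x)
      rfl rfl]
    rw [h.gadd_gadd (d12 h φ hφ x y) (d21 h φ hφ x y) (d21 h φ hφ x y) (d21 h ψ hψ x y)
      (h.toMCat.tw (phiC φ hφ 1) (phiC φ hφ 0) x) (h.toMCat.tw (phiC φ hφ 0) (phiC φ hφ 1) y)
      (h.toMCat.tw (phiC ψ hψ 1) (phiC φ hφ 1) x) (h.toMCat.tw (phiC ψ hψ 0) (phiC φ hφ 0) y)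
      rfl (h.add_comm' (d21 h φ hφ x y)).symm
      (Eq.trans rfl (h.add_comm' (d12 h φ hφ y x)))
      (Eq.trans rfl (h.add_comm' (d12 h ψ hψ y x)))]
    rw [h.toMCat.tw_tw (phiC ψ hψ 1) (phiC φ hφ 1) (phiC φ hφ 0) x,
        h.toMCat.tw_tw (phiC ψ hψ 0) (phiC φ hφ 0) (phiC φ hφ 1) y]
end

section
/- Let C be a parsummable category and φ : {1,2} × ℕ → ℕ an injection. For disjointly supported objects x and y of C set φ♯_{x,y} := [1,φ¹]^x + [1,φ²]^y : φ_*(x,y) → x + y. Let x, y, z be objects of C with pairwise disjoint supports, and let f : x → x′ and g : y → y′ be morphisms with supp(x) ∩ supp(y) = ∅ and supp(x′) ∩ supp(y′) = ∅. Then: (i) φ♯_{x,0} = [1,φ¹]^x : φ_*(x,0) → x; (ii) φ♯_{x,y} ∘ τ_{y,x} = φ♯_{y,x} : φ_*(y,x) → y + x; (iii) φ♯_{x,y+z} ∘ φ_*(id_x, φ♯_{y,z}) ∘ α_{x,y,z} = φ♯_{x+y,z} ∘ φ_*(φ♯_{x,y}, id_z) as morphisms φ_*(φ_*(x,y),z)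 → x + y + z; (iv) (f + g) ∘ φ♯_{x,y} = φ♯_{x′,y′} ∘ φ_*(f,g). -/
open CategoryTheory

/-- The morphism `[1,w]^x : w • x ⟶ x` (using `ι(1,x) = id`). -/
def toId {C : Type*} [Category C] [MulAction (Minj ℕ) C] (h : ParSum C) (w : Minj ℕ)
    (x : C) : w • x ⟶ x :=
  h.toMCat.tw 1 w x ≫ eqToHom (one_smul (Minj ℕ) x)

/-- The canonical comparison `φ♯_{x,y} = [1,φ¹]^x + [1,φ²]^y : φ_*(x,y) ⟶ x + y` for
disjointly supported `x` and `y`. -/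
def sharp {C : Type*} [Category C] [MulAction (Minj ℕ) C] (h : ParSum C)
    (φ : Fin 2 × ℕ → ℕ) (hφ : Function.Injective φ) (x y : C) (hxy : DisjSupp x y) :
    Fobj h φ hφ x y ⟶ h.add x y :=
  h.addHom (d12 h φ hφ x y) hxy (toId h (phiC φ hφ 0) x) (toId h (phiC φ hφ 1) y)

lemma disj_add_right {C : Type*} [Category C] [MulAction (Minj ℕ) C] (h : ParSum C)
    {x y z : C} (hxy : DisjSupp x y) (hyz : DisjSupp y z) (hxz : DisjSupp x z) :
    DisjSupp x (h.add y z) :=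
  Disjoint.mono_right (h.supp_add_subset hyz) (Set.disjoint_union_right.mpr ⟨hxy, hxz⟩)

lemma disj_add_left {C : Type*} [Category C] [MulAction (Minj ℕ) C] (h : ParSum C)
    {x y z : C} (hxy : DisjSupp x y) (hyz : DisjSupp y z) (hxz : DisjSupp x z) :
    DisjSupp (h.add x y) z :=
  Disjoint.mono_left (h.supp_add_subset hxy) (Set.disjoint_union_left.mpr ⟨hxz, hyz⟩)

section MyHelpers

variable {C : Type*} [Category C] [MulAction (Minj ℕ) C]

lemma MCat.ι_congr_s4 (h : MCat ℕ C) (u : Minj ℕ) {x y : C} (e : x = y) :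
    (h.ι u x).hom = eqToHom e ≫ (h.ι u y).hom ≫ eqToHom (show u • y = u • x by rw [e]) := by
  subst e; simp

lemma MCat.ι_congr_left (h : MCat ℕ C) {u v : Minj ℕ} (e : u = v) (x : C) :
    (h.ι u x).hom = (h.ι v x).hom ≫ eqToHom (show v • x = u • x by rw [e]) := by
  subst e; simp

lemma MCat.ι_one_s4 (h : MCat ℕ C) (x : C) :
    (h.ι 1 x).hom = eqToHom (one_smul (Minj ℕ) x).symm := by
  have key : (h.ι 1 ((1 : Minj ℕ) • x)).hom = eqToHom (mul_smul (1 : Minj ℕ) 1 x) := by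
    have E := h.ι_mul 1 1 x
    rw [MCat.ι_congr_left h (one_mul (1 : Minj ℕ)) x] at E
    simpa only [Category.assoc, eqToHom_trans, Iso.cancel_iso_hom_left] using E
  rw [h.ι_congr_s4 1 (one_smul (Minj ℕ) x).symm, key]
  simp

lemma MyHelper.toId_eq (h : ParSum C) (u : Minj ℕ) (x : C) :
    toId h u x = (h.toMCat.ι u x).inv := by
  simp [toId, MCat.tw, h.toMCat.ι_one_s4 x]

lemma MyHelper.toId_tw (h : ParSum C) (u v : Minj ℕ) (x : C) :
    h.toMCat.tw v u x ≫ toId h v x = toId h u x := by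
  simp [MyHelper.toId_eq, MCat.tw]

lemma MyHelper.toId_natural (h : ParSum C) (u : Minj ℕ) {x x' : C} (f : x ⟶ x') :
    toId h u x ≫ f = h.toMCat.act u f ≫ toId h u x' := by
  simp [MyHelper.toId_eq, MCat.act]

lemma MyHelper.toId_mul (h : ParSum C) (u v : Minj ℕ) (x : C) :
    toId h u (v • x) ≫ toId h v x = eqToHom (mul_smul u v x).symm ≫ toId h (u * v) x := by
  simp only [MyHelper.toId_eq]
  have E := h.toMCat.ι_mul v u x
  rw [Iso.inv_comp_eq, ← Category.assoc, Iso.eq_comp_inv, Iso.inv_comp_eq, ← Category.assoc, E]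
  simp

lemma MyHelper.toId_add (h : ParSum C) (u : Minj ℕ) {p q : C} (hd : DisjSupp p q)
    (hud : DisjSupp (u • p) (u • q)) :
    toId h u (h.add p q) =
      eqToHom (h.smul_add u hd) ≫ h.addHom hud hd (toId h u p) (toId h u q) := by
  have key : (h.toMCat.ι u (h.add p q)).hom ≫
      (eqToHom (h.smul_add u hd) ≫ h.addHom hud hd (toId h u p) (toId h u q)) = 𝟙 _ := by
    rw [h.ι_add u hd hud, MyHelper.toId_eq, MyHelper.toId_eq]
    simp only [Category.assoc, eqToHom_trans, eqToHom_trans_assoc, eqToHom_refl,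
      Category.comp_id, Category.id_comp]
    rw [← h.addHom_comp]
    simp [h.addHom_id]
  rw [MyHelper.toId_eq, ← Category.comp_id (h.toMCat.ι u (h.add p q)).inv, ← key,
    ← Category.assoc, Iso.inv_hom_id, Category.id_comp]

lemma MyHelper.addHom_eqToHom (h : ParSum C) {x x' y y' : C}
    (h1 : DisjSupp x x') (h2 : DisjSupp y y') (e1 : x = y) (e2 : x' = y') :
    h.addHom h1 h2 (eqToHom e1) (eqToHom e2) = eqToHom (by rw [e1, e2]) := by
  subst e1; subst e2
  simp [h.addHom_id]

lemma MyHelper.addHom_pull_left (h : ParSum C) {w x x' y y' : C}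
    (h1 : DisjSupp w x') (h1' : DisjSupp x x') (h2 : DisjSupp y y')
    (e : w = x) (f : x ⟶ y) (g : x' ⟶ y') :
    h.addHom h1 h2 (eqToHom e ≫ f) g =
      eqToHom (show h.add w x' = h.add x x' by rw [e]) ≫ h.addHom h1' h2 f g := by
  subst e; simp

lemma MyHelper.addHom_pull_right (h : ParSum C) {w x x' y y' : C}
    (h1 : DisjSupp x w) (h1' : DisjSupp x x') (h2 : DisjSupp y y')
    (e : w = x') (f : x ⟶ y) (g : x' ⟶ y') :
    h.addHom h1 h2 f (eqToHom e ≫ g) =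
      eqToHom (show h.add x w = h.add x x' by rw [e]) ≫ h.addHom h1' h2 f g := by
  subst e; simp

lemma MyHelper.addHom_eqToHom_zero (h : ParSum C) {x y p : C}
    (h1 : DisjSupp x p) (h2 : DisjSupp y h.zero) (f : x ⟶ y) (e : p = h.zero) :
    h.addHom h1 h2 f (eqToHom e) =
      eqToHom (show h.add x p = x by rw [e, h.add_zero']) ≫ f ≫
        eqToHom (h.add_zero' y).symm := by
  subst e
  simpa using h.addHom_zero h1 h2 f

lemma MyHelper.addHom_eqToHom_zero' (h : ParSum C) {x y p : C}
    (h1 : DisjSupp x h.zero) (h2 : DisjSupp y p) (f : x ⟶ y) (e : h.zero = p) :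
    h.addHom h1 h2 f (eqToHom e) =
      eqToHom (h.add_zero' x) ≫ f ≫
        eqToHom (show y = h.add y p by rw [← e, h.add_zero']) := by
  subst e
  simpa using h.addHom_zero h1 h2 f

lemma MyHelper.ι_zero (h : ParSum C) (u : Minj ℕ) :
    (h.toMCat.ι u h.zero).hom = eqToHom (h.smul_zero' u).symm := by
  have e : u • h.zero = h.zero := h.smul_zero' u
  have hd : DisjSupp h.zero h.zero := h.disj_zero_right h.zero
  have hud : DisjSupp (u • h.zero) (u • h.zero) := by rw [e]; exact hd
  have hud' : DisjSupp h.zero (u • h.zero) := by rw [e]; exact hd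
  set σ := (h.toMCat.ι u h.zero).hom with hσ
  haveI : IsIso σ := ⟨(h.toMCat.ι u h.zero).inv, by simp [hσ], by simp [hσ]⟩
  have E : h.addHom hd hud σ σ =
      (h.toMCat.ι u (h.add h.zero h.zero)).hom ≫ eqToHom (h.smul_add u hd) := by
    rw [h.ι_add u hd hud]; simp [hσ]
  rw [h.toMCat.ι_congr_s4 u (h.add_zero' h.zero)] at E
  have hsplit : h.addHom hd hud σ σ =
      h.addHom hd hd (𝟙 h.zero) (σ ≫ eqToHom e) ≫ h.addHom hd hud σ (eqToHom e.symm) := by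
    rw [← h.addHom_comp]
    simp
  rw [hsplit, h.zero_addHom hd hd (σ ≫ eqToHom e),
    MyHelper.addHom_eqToHom_zero' h hd hud σ e.symm] at E
  simp only [Category.assoc, eqToHom_trans] at E
  rw [eqToHom_comp_iff] at E
  simp only [eqToHom_trans_assoc, eqToHom_refl, Category.id_comp] at E
  rw [← hσ] at E
  rw [cancel_epi σ] at E
  rw [eqToHom_comp_iff, comp_eqToHom_iff] at E
  simp only [eqToHom_trans] at E
  exact E
lemma MyHelper.toId_zero (h : ParSum C) (u : Minj ℕ) :
    toId h u h.zero = eqToHom (h.smul_zero' u) := by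
  rw [MyHelper.toId_eq]
  calc (h.toMCat.ι u h.zero).inv
      = (h.toMCat.ι u h.zero).inv ≫
          ((h.toMCat.ι u h.zero).hom ≫ eqToHom (h.smul_zero' u)) := by
        rw [MyHelper.ι_zero h u]; simp
    _ = eqToHom (h.smul_zero' u) := by simp

lemma MyHelper.addHom_assoc' (h : ParSum C) {x y z x' y' z' : C}
    (hxy : DisjSupp x y) (hyz : DisjSupp y z) (hxz : DisjSupp x z)
    (hxy' : DisjSupp x' y') (hyz' : DisjSupp y' z') (hxz' : DisjSupp x' z')
    (hs : DisjSupp (h.add x y) z) (hs' : DisjSupp (h.add x' y') z')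
    (ht : DisjSupp x (h.add y z)) (ht' : DisjSupp x' (h.add y' z'))
    (f : x ⟶ x') (g : y ⟶ y') (k : z ⟶ z') :
    h.addHom ht ht' f (h.addHom hyz hyz' g k) =
      eqToHom (h.add_assoc' hxy hyz hxz).symm ≫
        h.addHom hs hs' (h.addHom hxy hxy' f g) k ≫
        eqToHom (h.add_assoc' hxy' hyz' hxz') := by
  rw [h.addHom_assoc hxy hyz hxz hxy' hyz' hxz' hs hs' ht ht' f g k]
  simp

end MyHelpers

attribute [reducible] Fobj DisjSupp

/-- Properties of the comparison morphisms `φ♯`: unitality, compatibility with the symmetry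
and associativity isomorphisms, and naturality. -/
theorem stmt4 (C : Type*) [Category C] [MulAction (Minj ℕ) C] (h : ParSum C)
    (φ : Fin 2 × ℕ → ℕ) (hφ : Function.Injective φ)
    (x y z x' y' : C) (f : x ⟶ x') (g : y ⟶ y')
    (hxy : DisjSupp x y) (hyz : DisjSupp y z) (hxz : DisjSupp x z)
    (hxy' : DisjSupp x' y') :
    -- (i) φ♯_{x,0} = [1,φ¹]^x
    (sharp h φ hφ x h.zero (h.disj_zero_right x) =
      eqToHom (zero_right_eq h φ hφ x).symm ≫ toId h (phiC φ hφ 0) x ≫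
        eqToHom (h.add_zero' x).symm) ∧
    -- (ii) φ♯_{x,y} ∘ τ_{y,x} = φ♯_{y,x}
    (braiding h φ hφ y x ≫ sharp h φ hφ x y hxy =
      sharp h φ hφ y x hxy.symm ≫ eqToHom (h.add_comm' hxy.symm)) ∧
    -- (iii) compatibility with the associativity isomorphism
    (phiAssociator h φ hφ x y z ≫ Fhom h φ hφ (𝟙 x) (sharp h φ hφ y z hyz) ≫
        sharp h φ hφ x (h.add y z) (disj_add_right h hxy hyz hxz) =
      Fhom h φ hφ (sharp h φ hφ x y hxy) (𝟙 z) ≫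
        sharp h φ hφ (h.add x y) z (disj_add_left h hxy hyz hxz) ≫
        eqToHom (h.add_assoc' hxy hyz hxz)) ∧
    -- (iv) naturality
    (sharp h φ hφ x y hxy ≫ h.addHom hxy hxy' f g =
      Fhom h φ hφ f g ≫ sharp h φ hφ x' y' hxy') := by
  refine ⟨?_, ?_, ?_, ?_⟩
  · -- (i)
    simp only [sharp]
    rw [MyHelper.toId_zero h (phiC φ hφ 1),
      MyHelper.addHom_eqToHom_zero h _ _ (toId h (phiC φ hφ 0) x) (h.smul_zero' (phiC φ hφ 1))]
  · -- (ii)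
    simp only [braiding, sharp]
    rw [h.addHom_comm (d21 h φ hφ y x) hxy.symm (d12 h φ hφ x y) hxy
      (toId h (phiC φ hφ 1) y) (toId h (phiC φ hφ 0) x)]
    simp only [Category.assoc, eqToHom_trans, eqToHom_trans_assoc, eqToHom_refl,
      Category.id_comp]
    slice_lhs 1 2 => rw [← h.addHom_comp]
    rw [MyHelper.toId_tw, MyHelper.toId_tw]
  · -- (iii)
    have hb2 : DisjSupp (phiC φ hφ 1 • (phiC φ hφ 0 • y)) (phiC φ hφ 1 • (phiC φ hφ 1 • z)) := by
      rw [← mul_smul, ← mul_smul]; exact d10_11 h φ hφ y z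
    have hbm : DisjSupp ((phiC φ hφ 1 * phiC φ hφ 0) • y) (phiC φ hφ 1 • (phiC φ hφ 1 • z)) := by
      rw [← mul_smul]; exact d10_11 h φ hφ y z
    have ha2 : DisjSupp (phiC φ hφ 0 • (phiC φ hφ 0 • x)) (phiC φ hφ 0 • (phiC φ hφ 1 • y)) := by
      rw [← mul_smul, ← mul_smul]; exact d00_01 h φ hφ x y
    have ham : DisjSupp ((phiC φ hφ 0 * phiC φ hφ 0) • x) (phiC φ hφ 0 • (phiC φ hφ 1 • y)) := by
      rw [← mul_smul]; exact d00_01 h φ hφ x y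
    trans (eqToHom (assocSrc_eq h φ hφ x y z) ≫
      h.addHom (dI1 h φ hφ x y z) (disj_add_left h hxy hyz hxz)
        (h.addHom (d00_01 h φ hφ x y) hxy
          (toId h (phiC φ hφ 0 * phiC φ hφ 0) x) (toId h (phiC φ hφ 0 * phiC φ hφ 1) y))
        (toId h (phiC φ hφ 1) z) ≫
      eqToHom (h.add_assoc' hxy hyz hxz))
    · -- LHS = N
      simp only [sharp, Fhom, phiAssociator, Fobj]
      rw [h.toMCat.act_id]
      simp only [Category.assoc]
      rw [← h.addHom_comp]
      rw [Category.id_comp]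
      rw [← MyHelper.toId_natural h (phiC φ hφ 1)]
      rw [MyHelper.toId_add h (phiC φ hφ 1) (d12 h φ hφ y z) hb2]
      simp only [Category.assoc]
      rw [← h.addHom_comp]
      rw [MyHelper.toId_mul h (phiC φ hφ 1) (phiC φ hφ 0) y,
        MyHelper.toId_mul h (phiC φ hφ 1) (phiC φ hφ 1) z]
      rw [MyHelper.addHom_pull_left h _ hbm]
      rw [MyHelper.addHom_pull_right h _ (d10_11 h φ hφ y z)]
      simp only [Category.assoc, eqToHom_trans, eqToHom_trans_assoc, eqToHom_refl,
        Category.id_comp]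
      rw [MyHelper.addHom_pull_right h _ (dI3 h φ hφ x y z)]
      rw [MyHelper.addHom_assoc' h (d0_10 h φ hφ x y) (d10_11 h φ hφ y z) (d0_11 h φ hφ x z)
        hxy hyz hxz (dI2 h φ hφ x y z) (disj_add_left h hxy hyz hxz)
        (dI3 h φ hφ x y z) (disj_add_right h hxy hyz hxz)]
      simp only [Category.assoc, eqToHom_trans, eqToHom_trans_assoc, eqToHom_refl,
        Category.id_comp]
      slice_lhs 2 3 => rw [← h.addHom_comp]
      rw [← h.addHom_comp]
      rw [MyHelper.toId_tw, MyHelper.toId_tw, MyHelper.toId_tw]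
    · -- N = RHS
      symm
      simp only [sharp, Fhom, Fobj]
      rw [h.toMCat.act_id]
      slice_lhs 1 2 => rw [← h.addHom_comp]
      rw [Category.id_comp]
      rw [← MyHelper.toId_natural h (phiC φ hφ 0)]
      rw [MyHelper.toId_add h (phiC φ hφ 0) (d12 h φ hφ x y) ha2]
      simp only [Category.assoc]
      rw [← h.addHom_comp]
      rw [MyHelper.toId_mul h (phiC φ hφ 0) (phiC φ hφ 0) x,
        MyHelper.toId_mul h (phiC φ hφ 0) (phiC φ hφ 1) y]
      rw [MyHelper.addHom_pull_left h _ ham]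
      rw [MyHelper.addHom_pull_right h _ (d00_01 h φ hφ x y)]
      simp only [Category.assoc, eqToHom_trans, eqToHom_trans_assoc, eqToHom_refl,
        Category.id_comp]
      rw [MyHelper.addHom_pull_left h _ (dI1 h φ hφ x y z)]
      simp only [Category.assoc, eqToHom_trans, eqToHom_trans_assoc, eqToHom_refl,
        Category.id_comp]
  · -- (iv)
    simp only [sharp, Fhom]
    rw [← h.addHom_comp, ← h.addHom_comp, MyHelper.toId_natural, MyHelper.toId_natural]
end

section
/- Let G be a group, H a subgroup of G of finite index, W = N_G(H)/H its Weyl group, and K a finite group. Consider the groupoid whose objects are the finite (K × G)-sets all of whose G-stabilizers are conjugate in G to H, with morphisms the (K × G)-equivariant bijections, and the groupoid whose objects are the finite (K × W)-sets on which W acts freely, with morphisms the (K × W)-equivariant bijections. Then the H-fixed-point functor, sending such a (K × G)-set A to A^H with its induced (K × W)-action and sending an equivariant bijection to its restriction to H-fixed points, is an equivalence of groupoids. (This is the fixed-point content of the proposition that taking H-fixed points is a global equivalence from the parsummable category of finite G-sets with H-isotropy to the parsummable category of free W_G H-sets.) -/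
open CategoryTheory

/-- A finite set with an action of the monoid `M`. -/
structure FinActSet (M : Type) [Monoid M] where
  carrier : Type
  [finite : Finite carrier]
  [action : MulAction M carrier]

attribute [instance] FinActSet.finite FinActSet.action

/-- The groupoid of finite `M`-sets and `M`-equivariant bijections. -/
instance FinActSet.category (M : Type) [Monoid M] : Category (FinActSet M) where
  Hom A B := {e : A.carrier ≃ B.carrier // ∀ (m : M) (a : A.carrier), e (m • a) = m • e a}
  id A := ⟨Equiv.refl _, fun _ _ => rfl⟩
  comp {A B C} e f := ⟨e.1.trans f.1, fun m a => by
    simp only [Equiv.trans_apply, e.2, f.2]⟩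
  id_comp e := Subtype.ext (Equiv.ext fun _ => rfl)
  comp_id e := Subtype.ext (Equiv.ext fun _ => rfl)
  assoc e f g := Subtype.ext (Equiv.ext fun _ => rfl)

section

variable (G : Type) [Group G] (H : Subgroup G) (K : Type) [Group K] [Finite K]

/-- The Weyl group `W = N_G(H)/H`. -/
abbrev Weyl : Type := ↥(Subgroup.normalizer (H : Set G)) ⧸ H.subgroupOf (Subgroup.normalizer (H : Set G))

/-- The `G`-stabilizer of a point of a `(K × G)`-set. -/
def stabG (A : FinActSet (K × G)) (a : A.carrier) : Subgroup G :=
  Subgroup.comap (MonoidHom.inr K G) (MulAction.stabilizer (K × G) a)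

/-- The property singling out the finite `(K × G)`-sets all of whose `G`-stabilizers are
conjugate to `H`. -/
def SrcProp (A : FinActSet (K × G)) : Prop :=
  ∀ a : A.carrier, ∃ x : G, stabG G K A a = Subgroup.map (MulAut.conj x).toMonoidHom H

/-- The property singling out the finite `(K × W)`-sets on which `W` acts freely. -/
def TgtProp (B : FinActSet (K × Weyl G H)) : Prop :=
  ∀ (b : B.carrier) (w : Weyl G H), ((1 : K), w) • b = b → w = 1

/-- The set of `H`-fixed points of a `(K × G)`-set. -/
def FixCarrier (A : FinActSet (K × G)) : Type :=
  {a : A.carrier // ∀ h : G, h ∈ H → (((1 : K), h) : K × G) • a = a}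

instance (A : FinActSet (K × G)) : Finite (FixCarrier G H K A) :=
  Subtype.finite

/-- The induced `(K × W)`-action on the `H`-fixed points. -/
instance fixAction (A : FinActSet (K × G)) : MulAction (K × Weyl G H) (FixCarrier G H K A) where
  smul kw a := Quotient.liftOn' kw.2
    (fun n => (⟨((kw.1, (n : G)) : K × G) • a.1, by
      intro h hH
      have key : (((1 : K), h) : K × G) * (kw.1, (n : G)) =
          (kw.1, (n : G)) * ((1 : K), (n : G)⁻¹ * h * (n : G)) := by
        rw [Prod.mk_mul_mk, Prod.mk_mul_mk, one_mul, mul_one]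
        congr 1
        group
      have hmem : (n : G)⁻¹ * h * (n : G) ∈ H := by
        have h2 := Subgroup.mem_normalizer_iff.mp n.2
        refine (h2 _).mpr ?_
        have h3 : (n : G) * ((n : G)⁻¹ * h * (n : G)) * (n : G)⁻¹ = h := by group
        rw [h3]
        exact hH
      calc (((1 : K), h) : K × G) • ((kw.1, (n : G)) : K × G) • a.1
          = ((((1 : K), h) : K × G) * (kw.1, (n : G))) • a.1 := (mul_smul _ _ _).symm
        _ = (((kw.1, (n : G)) : K × G) * ((1 : K), (n : G)⁻¹ * h * (n : G))) • a.1 := by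
            rw [key]
        _ = ((kw.1, (n : G)) : K × G) • (((1 : K), (n : G)⁻¹ * h * (n : G)) : K × G) • a.1 :=
            mul_smul _ _ _
        _ = ((kw.1, (n : G)) : K × G) • a.1 := by rw [a.2 _ hmem]⟩ : FixCarrier G H K A))
    (by
      intro n₁ n₂ hr
      have h12 : n₁⁻¹ * n₂ ∈ H.subgroupOf (Subgroup.normalizer (H : Set G)) := QuotientGroup.leftRel_apply.mp hr
      have hmem : (n₁ : G)⁻¹ * (n₂ : G) ∈ H := Subgroup.mem_subgroupOf.mp h12
      apply Subtype.ext
      show ((kw.1, (n₁ : G)) : K × G) • a.1 = ((kw.1, (n₂ : G)) : K × G) • a.1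
      have key : ((kw.1, (n₂ : G)) : K × G) =
          (kw.1, (n₁ : G)) * ((1 : K), (n₁ : G)⁻¹ * (n₂ : G)) := by
        rw [Prod.mk_mul_mk, mul_one]
        congr 1
        group
      rw [key, mul_smul, a.2 _ hmem])
  one_smul a := Subtype.ext (one_smul (K × G) a.1)
  mul_smul kw kw' a := by
    obtain ⟨k₁, w₁⟩ := kw
    obtain ⟨k₂, w₂⟩ := kw'
    induction w₁ using Quotient.inductionOn' with
    | h n₁ =>
      induction w₂ using Quotient.inductionOn' with
      | h n₂ =>
        apply Subtype.ext
        show ((k₁ * k₂, ((n₁ : G) * (n₂ : G))) : K × G) • a.1 =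
          ((k₁, (n₁ : G)) : K × G) • ((k₂, (n₂ : G)) : K × G) • a.1
        rw [← mul_smul, Prod.mk_mul_mk]

/-- The `H`-fixed points of a finite `(K × G)`-set with `H`-isotropy, as a finite
`(K × W)`-set. -/
def FixObj (A : FinActSet (K × G)) : FinActSet (K × Weyl G H) where
  carrier := FixCarrier G H K A

/-- The `H`-fixed-point functor, from finite `(K × G)`-sets with all `G`-stabilizers
conjugate to `H`, to finite `(K × W)`-sets with free `W`-action. -/
def fixedPointsFunctor [H.FiniteIndex] :
    ObjectProperty.FullSubcategory (SrcProp G H K) ⥤ ObjectProperty.FullSubcategory (TgtProp G H K) where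
  obj A := ⟨FixObj G H K A.obj, by
    intro b w hw
    induction w using Quotient.inductionOn' with
    | h n =>
      have hb : (((1 : K), (n : G)) : K × G) • b.1 = b.1 := congrArg Subtype.val hw
      have hn : (n : G) ∈ stabG G K A.obj b.1 := hb
      obtain ⟨x, hx⟩ := A.property b.1
      have hle : H ≤ stabG G K A.obj b.1 := by
        intro h hH
        exact b.2 h hH
      rw [hx] at hle hn
      have hidx : (Subgroup.map (MulAut.conj x).toMonoidHom H).index = H.index := by
        apply Subgroup.index_map_eq
        · exact (MulAut.conj x).surjective
        · rw [(MonoidHom.ker_eq_bot_iff _).mpr (MulAut.conj x).injective]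
          exact bot_le
      have hrel : H.relIndex (Subgroup.map (MulAut.conj x).toMonoidHom H) = 1 := by
        have h1 := Subgroup.relIndex_mul_index hle
        rw [hidx] at h1
        have h2 : H.index ≠ 0 := Subgroup.FiniteIndex.index_ne_zero
        have h1' : H.relIndex (Subgroup.map (MulAut.conj x).toMonoidHom H) * H.index =
            1 * H.index := by rw [one_mul]; exact h1
        exact Nat.eq_of_mul_eq_mul_right (Nat.pos_of_ne_zero h2) h1'
      have heq : Subgroup.map (MulAut.conj x).toMonoidHom H = H :=
        le_antisymm (Subgroup.relIndex_eq_one.mp hrel) hle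
      rw [heq] at hn
      exact (QuotientGroup.eq_one_iff n).mpr (Subgroup.mem_subgroupOf.mpr hn)⟩
  map {A B} e :=
    ⟨⟨Equiv.subtypeEquiv e.hom.1 (fun a => by
      constructor
      · intro ha h hH
        rw [← e.hom.2, ha h hH]
      · intro hb h hH
        apply e.hom.1.injective
        rw [e.hom.2, hb h hH]),
     by
      rintro ⟨k, w⟩ a
      induction w using Quotient.inductionOn' with
      | h n => exact Subtype.ext (e.hom.2 ((k, (n : G)) : K × G) a.1)⟩⟩
  map_id A := InducedCategory.hom_ext (Subtype.ext (Equiv.ext fun _ => Subtype.ext rfl))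
  map_comp e f := InducedCategory.hom_ext (Subtype.ext (Equiv.ext fun _ => Subtype.ext rfl))

end



section Aux
variable {G : Type} [Group G] (H : Subgroup G)

lemma mem_conjMap {x y : G} :
    y ∈ Subgroup.map (MulAut.conj x).toMonoidHom H ↔ x⁻¹ * y * x ∈ H := by
  rw [Subgroup.mem_map_equiv, MulAut.conj_symm_apply]

lemma conjMap_conjMap (g x : G) (S : Subgroup G) :
    Subgroup.map (MulAut.conj g).toMonoidHom (Subgroup.map (MulAut.conj x).toMonoidHom S)
      = Subgroup.map (MulAut.conj (g * x)).toMonoidHom S := by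
  ext y
  rw [mem_conjMap, mem_conjMap, mem_conjMap]
  have e : x⁻¹ * (g⁻¹ * y * g) * x = (g * x)⁻¹ * y * (g * x) := by group
  rw [e]

lemma conjMap_eq_self [H.FiniteIndex] (x : G)
    (hle : H ≤ Subgroup.map (MulAut.conj x).toMonoidHom H) :
    Subgroup.map (MulAut.conj x).toMonoidHom H = H := by
  have hidx : (Subgroup.map (MulAut.conj x).toMonoidHom H).index = H.index := by
    apply Subgroup.index_map_eq
    · exact (MulAut.conj x).surjective
    · rw [(MonoidHom.ker_eq_bot_iff _).mpr (MulAut.conj x).injective]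
      exact bot_le
  have hrel : H.relIndex (Subgroup.map (MulAut.conj x).toMonoidHom H) = 1 := by
    have h1 := Subgroup.relIndex_mul_index hle
    rw [hidx] at h1
    have h2 : H.index ≠ 0 := Subgroup.FiniteIndex.index_ne_zero
    exact Nat.eq_of_mul_eq_mul_right (Nat.pos_of_ne_zero h2) (by rw [h1, one_mul])
  exact le_antisymm (Subgroup.relIndex_eq_one.mp hrel) hle

lemma mem_normalizer_of_conjMap_eq {n : G}
    (h : Subgroup.map (MulAut.conj n).toMonoidHom H = H) : n ∈ Subgroup.normalizer (H : Set G) := by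
  rw [Subgroup.mem_normalizer_iff]
  intro x
  constructor
  · intro hx
    have : n * x * n⁻¹ ∈ Subgroup.map (MulAut.conj n).toMonoidHom H := by
      rw [mem_conjMap]
      have e : n⁻¹ * (n * x * n⁻¹) * n = x := by group
      rw [e]; exact hx
    rwa [h] at this
  · intro hx
    rw [← h, mem_conjMap] at hx
    have e : n⁻¹ * (n * x * n⁻¹) * n = x := by group
    rwa [e] at hx

end Aux

set_option linter.unusedSectionVars false
section Aux2
variable {G : Type} [Group G] {H : Subgroup G} {K : Type} [Group K] [Finite K]

lemma mem_stabG {A : FinActSet (K × G)} {a : A.carrier} {y : G} :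
    y ∈ stabG G K A a ↔ (((1 : K), y) : K × G) • a = a := Iff.rfl

lemma stabG_smul (A : FinActSet (K × G)) (k : K) (g : G) (a : A.carrier) :
    stabG G K A (((k, g) : K × G) • a)
      = Subgroup.map (MulAut.conj g).toMonoidHom (stabG G K A a) := by
  ext y
  rw [mem_conjMap, mem_stabG, mem_stabG]
  have key : (((1:K), y) : K × G) * (k, g) = ((k, g) : K × G) * ((1:K), g⁻¹ * y * g) := by
    rw [Prod.mk_mul_mk, Prod.mk_mul_mk, one_mul, mul_one]
    congr 1
    group
  constructor
  · intro hy
    have h2 : ((((1:K), y) : K × G) * (k, g)) • a = ((k, g) : K × G) • a := by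
      rw [mul_smul]; exact hy
    rw [key, mul_smul] at h2
    exact smul_left_cancel _ h2
  · intro hy
    rw [← mul_smul, key, mul_smul, hy]

lemma conjMap_one (S : Subgroup G) :
    Subgroup.map (MulAut.conj (1 : G)).toMonoidHom S = S := by
  ext y
  rw [mem_conjMap]
  simp

lemma stabG_fix_eq [H.FiniteIndex] (A : ObjectProperty.FullSubcategory (SrcProp G H K))
    {a : A.obj.carrier}
    (ha : ∀ h : G, h ∈ H → (((1 : K), h) : K × G) • a = a) : stabG G K A.obj a = H := by
  obtain ⟨x, hx⟩ := A.property a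
  have hle : H ≤ stabG G K A.obj a := fun h hH => ha h hH
  rw [hx] at hle ⊢
  exact conjMap_eq_self H x hle

noncomputable def xch (A : ObjectProperty.FullSubcategory (SrcProp G H K))
    (a : A.obj.carrier) : G :=
  (A.property a).choose

lemma xch_spec (A : ObjectProperty.FullSubcategory (SrcProp G H K)) (a : A.obj.carrier) :
    stabG G K A.obj a = Subgroup.map (MulAut.conj (xch A a)).toMonoidHom H :=
  (A.property a).choose_spec

lemma base_fix (A : ObjectProperty.FullSubcategory (SrcProp G H K)) (a : A.obj.carrier) :
    ∀ h : G, h ∈ H → (((1 : K), h) : K × G) • ((((1 : K), (xch A a)⁻¹) : K × G) • a)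
      = (((1 : K), (xch A a)⁻¹) : K × G) • a := by
  intro h hH
  have hs : stabG G K A.obj ((((1 : K), (xch A a)⁻¹) : K × G) • a) = H := by
    rw [stabG_smul, xch_spec A a, conjMap_conjMap, inv_mul_cancel, conjMap_one]
  have hmem : h ∈ stabG G K A.obj ((((1 : K), (xch A a)⁻¹) : K × G) • a) := by
    rw [hs]; exact hH
  exact hmem

noncomputable def basePt (A : ObjectProperty.FullSubcategory (SrcProp G H K))
    (a : A.obj.carrier) : FixCarrier G H K A.obj :=
  ⟨(((1 : K), (xch A a)⁻¹) : K × G) • a, base_fix A a⟩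

lemma basePt_spec (A : ObjectProperty.FullSubcategory (SrcProp G H K)) (a : A.obj.carrier) :
    (((1 : K), xch A a) : K × G) • (basePt A a).1 = a := by
  show (((1 : K), xch A a) : K × G) • (((1 : K), (xch A a)⁻¹) : K × G) • a = a
  rw [← mul_smul, Prod.mk_mul_mk, one_mul, mul_inv_cancel]
  exact one_smul _ a

lemma fix_smul_val (A : FinActSet (K × G)) (k : K) (n : Subgroup.normalizer (H : Set G))
    (c : FixCarrier G H K A) :
    (((k, (QuotientGroup.mk n : Weyl G H)) : K × Weyl G H) • c).1
      = ((k, (n : G)) : K × G) • c.1 := rfl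

end Aux2


section Aux3
variable {G : Type} [Group G] {H : Subgroup G} [H.FiniteIndex] {K : Type} [Group K] [Finite K]

noncomputable def extFun (A B : ObjectProperty.FullSubcategory (SrcProp G H K))
    (φ : FixCarrier G H K A.obj → FixCarrier G H K B.obj) :
    A.obj.carrier → B.obj.carrier :=
  fun a => (((1 : K), xch A a) : K × G) • (φ (basePt A a)).1

lemma extFun_fix (A B : ObjectProperty.FullSubcategory (SrcProp G H K))
    (φ : FixCarrier G H K A.obj → FixCarrier G H K B.obj)
    (hφ : ∀ (m : K × Weyl G H) c, φ (m • c) = m • φ c)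
    (c : FixCarrier G H K A.obj) :
    extFun A B φ c.1 = (φ c).1 := by
  have hx : xch A c.1 ∈ Subgroup.normalizer (H : Set G) := by
    apply mem_normalizer_of_conjMap_eq
    rw [← xch_spec A c.1]
    exact stabG_fix_eq A c.2
  set n : Subgroup.normalizer (H : Set G) := ⟨xch A c.1, hx⟩ with hn
  have hb : basePt A c.1
      = (((1 : K), (QuotientGroup.mk n⁻¹ : Weyl G H)) : K × Weyl G H) • c := by
    apply Subtype.ext
    rw [fix_smul_val]
    rfl
  show (((1 : K), xch A c.1) : K × G) • (φ (basePt A c.1)).1 = (φ c).1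
  rw [hb, hφ, fix_smul_val]
  show (((1 : K), xch A c.1) : K × G) • (((1 : K), (xch A c.1)⁻¹) : K × G) • (φ c).1 = (φ c).1
  rw [← mul_smul, Prod.mk_mul_mk, one_mul, mul_inv_cancel]
  exact one_smul _ _

lemma extFun_equivariant (A B : ObjectProperty.FullSubcategory (SrcProp G H K))
    (φ : FixCarrier G H K A.obj → FixCarrier G H K B.obj)
    (hφ : ∀ (m : K × Weyl G H) c, φ (m • c) = m • φ c)
    (m : K × G) (a : A.obj.carrier) :
    extFun A B φ (m • a) = m • extFun A B φ a := by
  obtain ⟨k, g⟩ := m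
  set x := xch A a with hxdef
  set x' := xch A (((k, g) : K × G) • a) with hx'def
  have hconj : Subgroup.map (MulAut.conj x').toMonoidHom H
      = Subgroup.map (MulAut.conj (g * x)).toMonoidHom H := by
    rw [← xch_spec, stabG_smul, xch_spec A a, conjMap_conjMap]
  have hn : x'⁻¹ * (g * x) ∈ Subgroup.normalizer (H : Set G) := by
    apply mem_normalizer_of_conjMap_eq
    rw [← conjMap_conjMap, ← hconj, conjMap_conjMap, inv_mul_cancel, conjMap_one]
  set nn : Subgroup.normalizer (H : Set G) := ⟨x'⁻¹ * (g * x), hn⟩ with hnn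
  have hb : basePt A (((k, g) : K × G) • a)
      = (((k, (QuotientGroup.mk nn : Weyl G H)) : K × Weyl G H) • basePt A a) := by
    apply Subtype.ext
    rw [fix_smul_val]
    show (((1 : K), x'⁻¹) : K × G) • ((k, g) : K × G) • a
      = ((k, x'⁻¹ * (g * x)) : K × G) • (((1 : K), x⁻¹) : K × G) • a
    rw [← mul_smul, ← mul_smul, Prod.mk_mul_mk, Prod.mk_mul_mk]
    simp [mul_assoc]
  show (((1 : K), x') : K × G) • (φ (basePt A (((k, g) : K × G) • a))).1
      = ((k, g) : K × G) • (((1 : K), x) : K × G) • (φ (basePt A a)).1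
  rw [hb, hφ, fix_smul_val]
  rw [← mul_smul, ← mul_smul, Prod.mk_mul_mk, Prod.mk_mul_mk]
  simp [mul_assoc, hnn]

lemma extFun_comp (A B : ObjectProperty.FullSubcategory (SrcProp G H K))
    (φ : FixCarrier G H K A.obj → FixCarrier G H K B.obj)
    (ψ : FixCarrier G H K B.obj → FixCarrier G H K A.obj)
    (hφ : ∀ (m : K × Weyl G H) c, φ (m • c) = m • φ c)
    (hψ : ∀ (m : K × Weyl G H) c, ψ (m • c) = m • ψ c)
    (hcomp : ∀ c, ψ (φ c) = c) (a : A.obj.carrier) :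
    extFun B A ψ (extFun A B φ a) = a := by
  rw [← basePt_spec A a]
  rw [extFun_equivariant A B φ hφ, extFun_fix A B φ hφ,
    extFun_equivariant B A ψ hψ, extFun_fix B A ψ hψ, hcomp]

end Aux3


lemma fpf_faithful (G : Type) [Group G] (H : Subgroup G) [H.FiniteIndex]
    (K : Type) [Group K] [Finite K] : (fixedPointsFunctor G H K).Faithful := by
  constructor
  intro A B e f h
  apply InducedCategory.hom_ext; apply Subtype.ext; apply Equiv.ext; intro a
  have hfix : ∀ c : FixCarrier G H K A.obj, e.hom.1 c.1 = f.hom.1 c.1 := by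
    intro c
    have h2 := congrArg
      (fun ψ : (fixedPointsFunctor G H K).obj A ⟶ (fixedPointsFunctor G H K).obj B =>
        ((ψ.hom.1 c).1 : B.obj.carrier)) h
    exact h2
  conv_lhs => rw [← basePt_spec A a, e.hom.2]
  conv_rhs => rw [← basePt_spec A a, f.hom.2]
  rw [hfix]

lemma fpf_full (G : Type) [Group G] (H : Subgroup G) [H.FiniteIndex]
    (K : Type) [Group K] [Finite K] : (fixedPointsFunctor G H K).Full := by
  constructor
  intro A B φ
  have hφ : ∀ (m : K × Weyl G H) c, φ.hom.1 (m • c) = m • φ.hom.1 c := φ.hom.2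
  have hψ : ∀ (m : K × Weyl G H) c, φ.hom.1.symm (m • c) = m • φ.hom.1.symm c := by
    intro m c
    apply φ.hom.1.injective
    rw [φ.hom.2, Equiv.apply_symm_apply, Equiv.apply_symm_apply]
  refine ⟨⟨⟨⟨extFun A B φ.hom.1, extFun B A φ.hom.1.symm,
      fun a => extFun_comp A B φ.hom.1 φ.hom.1.symm hφ hψ (fun c => φ.hom.1.symm_apply_apply c) a,
      fun b => extFun_comp B A φ.hom.1.symm φ.hom.1 hψ hφ (fun c => φ.hom.1.apply_symm_apply c) b⟩,
    fun m a => extFun_equivariant A B φ.hom.1 hφ m a⟩⟩, ?_⟩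
  apply InducedCategory.hom_ext; apply Subtype.ext; apply Equiv.ext; intro c
  apply Subtype.ext
  exact extFun_fix A B φ.hom.1 hφ c


section Aux5
variable (G : Type) [Group G] (H : Subgroup G) (K : Type) [Group K] [Finite K]
variable (B : FinActSet (K × Weyl G H))

/-- The induction relation on `G × B`. -/
def indRel : Setoid (G × B.carrier) where
  r p q := ∃ n : Subgroup.normalizer (H : Set G),
    p.1 = q.1 * (n : G)⁻¹ ∧
    p.2 = (((1 : K), (QuotientGroup.mk n : Weyl G H)) : K × Weyl G H) • q.2
  iseqv := by
    constructor
    · intro p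
      refine ⟨1, by simp, ?_⟩
      simp [Prod.mk_one_one]
    · rintro p q ⟨n, h1, h2⟩
      refine ⟨n⁻¹, ?_, ?_⟩
      · rw [h1]; simp
      · rw [h2, ← mul_smul]
        simp [Prod.mk_one_one]
    · rintro p q r ⟨n, h1, h2⟩ ⟨m, h3, h4⟩
      refine ⟨n * m, ?_, ?_⟩
      · rw [h1, h3]; simp [mul_assoc]
      · rw [h2, h4, ← mul_smul]
        simp

abbrev IndCarrier : Type := Quotient (indRel G H K B)

instance indAction : MulAction (K × G) (IndCarrier G H K B) where
  smul m c := Quotient.liftOn c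
    (fun p => Quotient.mk (indRel G H K B)
      (m.2 * p.1, ((m.1, (1 : Weyl G H)) : K × Weyl G H) • p.2))
    (by
      rintro p q ⟨n, h1, h2⟩
      apply Quotient.sound
      refine ⟨n, ?_, ?_⟩
      · rw [h1]; simp [mul_assoc]
      · rw [h2, ← mul_smul, ← mul_smul, Prod.mk_mul_mk, Prod.mk_mul_mk, one_mul, mul_one,
          one_mul, mul_one])
  one_smul c := by
    obtain ⟨⟨g, b⟩, rfl⟩ := Quotient.exists_rep c
    show Quotient.mk (indRel G H K B) (1 * g, (((1 : K), (1 : Weyl G H)) : K × Weyl G H) • b)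
      = Quotient.mk (indRel G H K B) (g, b)
    rw [one_mul]
    have h1 : (((1 : K), (1 : Weyl G H)) : K × Weyl G H) = 1 := rfl
    rw [h1, one_smul]
  mul_smul m m' c := by
    obtain ⟨⟨g, b⟩, rfl⟩ := Quotient.exists_rep c
    obtain ⟨k₁, g₁⟩ := m
    obtain ⟨k₂, g₂⟩ := m'
    show Quotient.mk (indRel G H K B)
        (g₁ * g₂ * g, ((k₁ * k₂, (1 : Weyl G H)) : K × Weyl G H) • b)
      = Quotient.mk (indRel G H K B)
        (g₁ * (g₂ * g), ((k₁, (1 : Weyl G H)) : K × Weyl G H)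
          • (((k₂, (1 : Weyl G H)) : K × Weyl G H) • b))
    rw [← mul_smul, Prod.mk_mul_mk, mul_one, mul_assoc]

lemma ind_smul_mk (m : K × G) (p : G × B.carrier) :
    m • (Quotient.mk (indRel G H K B) p) = Quotient.mk (indRel G H K B)
      (m.2 * p.1, ((m.1, (1 : Weyl G H)) : K × Weyl G H) • p.2) := rfl

def indProj (p : (G ⧸ H) × B.carrier) : IndCarrier G H K B :=
  Quotient.liftOn p.1 (fun g => Quotient.mk (indRel G H K B) (g, p.2)) (by
    intro g₁ g₂ hg
    have hmem : g₁⁻¹ * g₂ ∈ H := QuotientGroup.leftRel_apply.mp hg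
    apply Quotient.sound
    refine ⟨⟨g₁⁻¹ * g₂, H.le_normalizer hmem⟩, ?_, ?_⟩
    · show g₁ = g₂ * (g₁⁻¹ * g₂)⁻¹
      group
    · have h1 : (QuotientGroup.mk (⟨g₁⁻¹ * g₂, H.le_normalizer hmem⟩ : Subgroup.normalizer (H : Set G))
          : Weyl G H) = 1 :=
        (QuotientGroup.eq_one_iff _).mpr (Subgroup.mem_subgroupOf.mpr hmem)
      rw [h1]
      simp [Prod.mk_one_one])

lemma indProj_surjective : Function.Surjective (indProj G H K B) := by
  intro c
  obtain ⟨⟨g, b⟩, rfl⟩ := Quotient.exists_rep c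
  exact ⟨(QuotientGroup.mk g, b), rfl⟩

instance [H.FiniteIndex] : Finite (IndCarrier G H K B) :=
  Finite.of_surjective _ (indProj_surjective G H K B)

def IndObj [H.FiniteIndex] : FinActSet (K × G) where
  carrier := IndCarrier G H K B

lemma indStab [H.FiniteIndex] (hB : TgtProp G H K B) (g : G) (b : B.carrier) :
    stabG G K (IndObj G H K B) (Quotient.mk (indRel G H K B) (g, b))
      = Subgroup.map (MulAut.conj g).toMonoidHom H := by
  ext y
  erw [mem_stabG, mem_conjMap, ind_smul_mk]
  constructor
  · intro hy
    obtain ⟨n, h1, h2⟩ := Quotient.exact hy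
    have hw : (QuotientGroup.mk n : Weyl G H) = 1 := by
      apply hB b
      rw [← h2]
      simp [Prod.mk_one_one]
    have hmem : (n : G) ∈ H := Subgroup.mem_subgroupOf.mp ((QuotientGroup.eq_one_iff n).mp hw)
    have he : g⁻¹ * y * g = ((n : G))⁻¹ := by
      have h1' : y * g = g * ((n : G))⁻¹ := h1
      rw [mul_assoc, h1']
      group
    rw [he]
    exact inv_mem hmem
  · intro hy
    apply Quotient.sound
    refine ⟨⟨(g⁻¹ * y * g)⁻¹, H.le_normalizer (inv_mem hy)⟩, ?_, ?_⟩
    · show y * g = g * ((g⁻¹ * y * g)⁻¹ : G)⁻¹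
      group
    · have h1 : (QuotientGroup.mk (⟨(g⁻¹ * y * g)⁻¹, H.le_normalizer (inv_mem hy)⟩
          : Subgroup.normalizer (H : Set G)) : Weyl G H) = 1 :=
        (QuotientGroup.eq_one_iff _).mpr (Subgroup.mem_subgroupOf.mpr (inv_mem hy))
      rw [h1]

lemma indSrcProp [H.FiniteIndex] (hB : TgtProp G H K B) : SrcProp G H K (IndObj G H K B) := by
  intro c
  obtain ⟨⟨g, b⟩, rfl⟩ := Quotient.exists_rep c
  exact ⟨g, indStab G H K B hB g b⟩

def jFun [H.FiniteIndex] (b : B.carrier) : FixCarrier G H K (IndObj G H K B) :=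
  ⟨Quotient.mk (indRel G H K B) ((1 : G), b), by
    intro h hH
    erw [ind_smul_mk]
    apply Quotient.sound
    refine ⟨(⟨h, H.le_normalizer hH⟩ : Subgroup.normalizer (H : Set G))⁻¹, ?_, ?_⟩
    · show h * 1 = 1 * ((h : G)⁻¹)⁻¹
      group
    · have h1 : (QuotientGroup.mk ((⟨h, H.le_normalizer hH⟩ : Subgroup.normalizer (H : Set G))⁻¹)
          : Weyl G H) = 1 :=
        (QuotientGroup.eq_one_iff _).mpr (Subgroup.mem_subgroupOf.mpr (by simpa using inv_mem hH))
      rw [h1]⟩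

lemma jFun_equivariant [H.FiniteIndex] (m : K × Weyl G H) (b : B.carrier) :
    jFun G H K B (m • b) = m • jFun G H K B b := by
  obtain ⟨k, w⟩ := m
  induction w using Quotient.inductionOn' with
  | h n =>
    apply Subtype.ext
    rw [fix_smul_val]
    show Quotient.mk (indRel G H K B) ((1 : G), ((k, QuotientGroup.mk n) : K × Weyl G H) • b)
      = ((k, (n : G)) : K × G) • Quotient.mk (indRel G H K B) ((1 : G), b)
    rw [ind_smul_mk]
    apply Quotient.sound
    refine ⟨n, ?_, ?_⟩
    · simp
    · rw [← mul_smul, Prod.mk_mul_mk, one_mul, mul_one]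

lemma jFun_injective [H.FiniteIndex] : Function.Injective (jFun G H K B) := by
  intro b b' hb
  have hval : Quotient.mk (indRel G H K B) ((1 : G), b)
      = Quotient.mk (indRel G H K B) ((1 : G), b') := congrArg Subtype.val hb
  obtain ⟨n, h1, h2⟩ := Quotient.exact hval
  have hn : (n : G) = 1 := by
    have h1' : (1 : G) = 1 * ((n : G))⁻¹ := h1
    rw [one_mul] at h1'
    rw [← inv_inv (n : G), ← h1', inv_one]
  have hw : (QuotientGroup.mk n : Weyl G H) = 1 := by
    apply (QuotientGroup.eq_one_iff _).mpr
    apply Subgroup.mem_subgroupOf.mpr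
    rw [hn]
    exact H.one_mem
  rw [hw] at h2
  simpa [Prod.mk_one_one] using h2

lemma jFun_surjective [H.FiniteIndex] (hB : TgtProp G H K B) :
    Function.Surjective (jFun G H K B) := by
  rintro ⟨c, hc⟩
  obtain ⟨⟨g, b⟩, rfl⟩ := Quotient.exists_rep c
  have hle : H ≤ stabG G K (IndObj G H K B) (Quotient.mk (indRel G H K B) (g, b)) :=
    fun h hH => hc h hH
  rw [indStab G H K B hB g b] at hle
  have heq := conjMap_eq_self H g hle
  have hg : g ∈ Subgroup.normalizer (H : Set G) := mem_normalizer_of_conjMap_eq H heq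
  refine ⟨(((1 : K), (QuotientGroup.mk (⟨g, hg⟩ : Subgroup.normalizer (H : Set G)) : Weyl G H))
      : K × Weyl G H) • b, ?_⟩
  apply Subtype.ext
  show Quotient.mk (indRel G H K B) ((1 : G),
      (((1 : K), (QuotientGroup.mk (⟨g, hg⟩ : Subgroup.normalizer (H : Set G)) : Weyl G H)) : K × Weyl G H) • b)
    = Quotient.mk (indRel G H K B) (g, b)
  apply Quotient.sound
  exact ⟨⟨g, hg⟩, by simp, rfl⟩

end Aux5


def mkIsoFS {M : Type} [Group M] {P : FinActSet M → Prop} {A B : ObjectProperty.FullSubcategory P}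
    (e : A.obj.carrier ≃ B.obj.carrier) (he : ∀ (m : M) (a : A.obj.carrier),
      e (m • a) = m • e a) : A ≅ B where
  hom := ⟨⟨e, he⟩⟩
  inv := ⟨⟨e.symm, fun m b => by
    apply e.injective
    rw [he, Equiv.apply_symm_apply, Equiv.apply_symm_apply]⟩⟩
  hom_inv_id := InducedCategory.hom_ext <| Subtype.ext (Equiv.ext fun a => e.symm_apply_apply a)
  inv_hom_id := InducedCategory.hom_ext <| Subtype.ext (Equiv.ext fun b => e.apply_symm_apply b)

lemma fpf_essSurj (G : Type) [Group G] (H : Subgroup G) [H.FiniteIndex]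
    (K : Type) [Group K] [Finite K] : (fixedPointsFunctor G H K).EssSurj := by
  constructor
  rintro ⟨B, hB⟩
  refine ⟨⟨IndObj G H K B, indSrcProp G H K B hB⟩, ⟨?_⟩⟩
  have hbij : Function.Bijective (jFun G H K B) :=
    ⟨jFun_injective G H K B, jFun_surjective G H K B hB⟩
  let e : B.carrier ≃
      ((fixedPointsFunctor G H K).obj
        ⟨IndObj G H K B, indSrcProp G H K B hB⟩).obj.carrier :=
    Equiv.ofBijective _ hbij
  have he : ∀ (m : K × Weyl G H) (b : B.carrier), e (m • b) = m • e b :=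
    fun m b => jFun_equivariant G H K B m b
  exact (mkIsoFS (A := ⟨B, hB⟩)
    (B := (fixedPointsFunctor G H K).obj ⟨IndObj G H K B, indSrcProp G H K B hB⟩) e he).symm

/-- Let `H` be a finite-index subgroup of `G`, `W = N_G(H)/H` its Weyl group, and `K` a
finite group.  The `H`-fixed-point functor, from the groupoid of finite `(K × G)`-sets all of
whose `G`-stabilizers are conjugate to `H` to the groupoid of finite `(K × W)`-sets with
free `W`-action, is an equivalence of categories. -/
theorem stmt8 (G : Type) [Group G] (H : Subgroup G) [H.FiniteIndex]
    (K : Type) [Group K] [Finite K] :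
    (fixedPointsFunctor G H K).IsEquivalence :=
  CategoryTheory.Functor.IsEquivalence.mk (fpf_faithful G H K) (fpf_full G H K)
    (fpf_essSurj G H K)
end

section
/- Let R be a ring, G a finite group, and P a left module over the group ring R[G] such that P, regarded as an R-module by restriction of scalars along R → R[G], is finitely generated and projective. Then there exist a natural number n, an R[G]-linear map ι : P → R[G]^n into a finitely generated free R[G]-module, and an R-linear map ρ : R[G]^n → P such that ρ ∘ ι = id_P. In particular ι is injective, so P is isomorphic as an R[G]-module to an R[G]-submodule of a finitely generated free R[G]-module whose inclusion is R-linearly split. -/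
/-- Let `R` be a ring, `G` a finite group, and `P` a left `R[G]`-module that is finitely
generated and projective as an `R`-module (for the restriction of scalars along
`R → R[G]`, which is encoded by the `IsScalarTower` hypothesis).  Then there are an `n`, an
`R[G]`-linear map `i : P → R[G]^n` and an `R`-linear map `ρ : R[G]^n → P` with `ρ ∘ i = id`;
in particular `i` is injective, so `P` is an `R[G]`-submodule of a finitely generated free
`R[G]`-module whose inclusion is `R`-linearly split. -/
theorem stmt9 (R : Type) [Ring R] (G : Type) [Group G] [Finite G]
    (P : Type) [AddCommGroup P] [Module (MonoidAlgebra R G) P]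
    [Module R P] [IsScalarTower R (MonoidAlgebra R G) P]
    (hfg : Module.Finite R P) (hproj : Module.Projective R P) :
    ∃ (n : ℕ) (i : P →ₗ[MonoidAlgebra R G] (Fin n → MonoidAlgebra R G))
      (ρ : (Fin n → MonoidAlgebra R G) →ₗ[R] P),
      (∀ p : P, ρ (i p) = p) ∧ Function.Injective i := by
  classical
  haveI : Fintype G := Fintype.ofFinite G
  obtain ⟨n, π, hπ⟩ := Module.Finite.exists_fin' R P
  obtain ⟨s, hs⟩ := Module.projective_lifting_property π LinearMap.id hπ
  have hsid : ∀ p : P, π (s p) = p := fun p => congrArg (fun f => f p) (congrArg DFunLike.coe hs)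
  set i0 : P → Fin n → MonoidAlgebra R G :=
    fun p j => ∑ g : G, MonoidAlgebra.single g (s ((MonoidAlgebra.of R G g⁻¹) • p) j) with hi0
  have hadd : ∀ p q, i0 (p + q) = i0 p + i0 q := by
    intro p q; funext j
    simp [hi0, smul_add, map_add, Finsupp.single_add, Finset.sum_add_distrib]
  have hsingle : ∀ (h : G) (r : R) (p : P),
      i0 ((MonoidAlgebra.single h r : MonoidAlgebra R G) • p)
        = (MonoidAlgebra.single h r : MonoidAlgebra R G) • i0 p := by
    intro h r p
    funext j
    have key : ∀ g : G,
        (MonoidAlgebra.of R G g⁻¹) • ((MonoidAlgebra.single h r : MonoidAlgebra R G) • p)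
          = r • ((MonoidAlgebra.of R G (g⁻¹ * h)) • p) := by
      intro g
      rw [smul_smul]
      have : (MonoidAlgebra.of R G g⁻¹) * (MonoidAlgebra.single h r : MonoidAlgebra R G)
          = r • (MonoidAlgebra.of R G (g⁻¹ * h)) := by
        simp [MonoidAlgebra.of_apply, MonoidAlgebra.single_mul_single]
      rw [this, smul_assoc]
    have lhs : i0 ((MonoidAlgebra.single h r : MonoidAlgebra R G) • p) j
        = ∑ g : G, MonoidAlgebra.single g (r * s ((MonoidAlgebra.of R G (g⁻¹ * h)) • p) j) := by
      simp only [hi0]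
      refine Finset.sum_congr rfl fun g _ => ?_
      rw [key g, map_smul]
      simp [smul_eq_mul]
    rw [lhs]
    have rhs : ((MonoidAlgebra.single h r : MonoidAlgebra R G) • i0 p) j
        = ∑ g : G, MonoidAlgebra.single (h * g) (r * s ((MonoidAlgebra.of R G g⁻¹) • p) j) := by
      simp only [Pi.smul_apply, hi0, smul_eq_mul, Finset.mul_sum]
      refine Finset.sum_congr rfl fun g _ => ?_
      rw [MonoidAlgebra.single_mul_single]
    rw [rhs]
    rw [← Equiv.sum_comp (Equiv.mulLeft h)
      (fun g => MonoidAlgebra.single g (r * s ((MonoidAlgebra.of R G (g⁻¹ * h)) • p) j))]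
    refine Finset.sum_congr rfl fun g _ => ?_
    simp [mul_inv_rev]
  have hzero : i0 0 = 0 := by
    funext j; simp [hi0]
  have hsmul : ∀ (c : MonoidAlgebra R G) (p : P), i0 (c • p) = c • i0 p := by
    intro c p
    induction c using MonoidAlgebra.induction_linear with
    | zero => simp [hzero]
    | add f g hf hg => rw [add_smul, hadd, hf, hg, add_smul]
    | single a b => exact hsingle a b p
  set i : P →ₗ[MonoidAlgebra R G] (Fin n → MonoidAlgebra R G) :=
    { toFun := i0
      map_add' := hadd
      map_smul' := fun c p => hsmul c p } with hi
  set ρ : (Fin n → MonoidAlgebra R G) →ₗ[R] P :=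
    π.comp (LinearMap.pi fun j => (Finsupp.lapply (1 : G)).comp ((MonoidAlgebra.coeffLinearEquiv R).toLinearMap.comp (LinearMap.proj j))) with hρ
  have hsec : ∀ p : P, ρ (i p) = p := by
    intro p
    have : (fun j => (i0 p j).coeff (1 : G)) = s p := by
      funext j
      have h1 : (i0 p j).coeff (1 : G)
          = ∑ g : G, (MonoidAlgebra.single g
              (s ((MonoidAlgebra.of R G) g⁻¹ • p) j) : MonoidAlgebra R G).coeff (1 : G) := by
        rw [hi0, MonoidAlgebra.coeff_sum]
        exact Finsupp.finset_sum_apply _ _ _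
      rw [h1, Finset.sum_eq_single (f := fun g => (MonoidAlgebra.single g
          (s ((MonoidAlgebra.of R G) g⁻¹ • p) j) : MonoidAlgebra R G).coeff (1 : G)) (1 : G)
        (fun g _ hg => Finsupp.single_eq_of_ne' hg) (by simp)]
      rw [MonoidAlgebra.coeff_single, Finsupp.single_eq_same]
      simp [← MonoidAlgebra.one_def]
    simp only [hρ, hi, LinearMap.comp_apply, LinearMap.coe_mk, AddHom.coe_mk]
    have h2 : (LinearMap.pi fun j => ((Finsupp.lapply (1 : G) :
          (G →₀ R) →ₗ[R] R)).comp ((MonoidAlgebra.coeffLinearEquiv R).toLinearMap.comp (LinearMap.proj j))) (i0 p) = s p := by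
      ext j
      simpa using congrFun this j
    exact (congrArg π h2).trans (hsid p)
  refine ⟨n, i, ρ, hsec, ?_⟩
  intro p q hpq
  have := congrArg ρ hpq
  rwa [hsec, hsec] at this
end

section
/- Let X be a set with a left action of the monoid M(ℕ) of injective self-maps of ℕ, and let x be an element of X. If x is supported on a finite subset A of ℕ and also supported on a finite subset B of ℕ, then x is supported on A ∩ B. Consequently, every finitely supported element x of X is supported on its support supp(x). -/
open CategoryTheory

open scoped Classical in
/-- Auxiliary: the "q" part, fixing `B` and moving everything else to fresh names `φ(2n)`. -/
noncomputable def qfun (B : Finset ℕ) (φ : ℕ → ℕ) : ℕ → ℕ :=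
  fun n => if n ∈ B then n else φ (2*n)

open scoped Classical in
/-- Auxiliary: the "p" part. -/
noncomputable def pfun (A B : Finset ℕ) (g φ : ℕ → ℕ) : ℕ → ℕ := fun m =>
  if m ∈ B then g m
  else if m ∈ A then m
  else if h : ∃ n, n ∉ B ∧ m = φ (2*n) then g h.choose
  else φ (2*m+1)

lemma qfun_inj {B : Finset ℕ} {φ : ℕ → ℕ} (hφ : Function.Injective φ)
    (hφB : ∀ n, φ n ∉ B) : Function.Injective (qfun B φ) := by
  intro a b hab
  unfold qfun at hab
  split_ifs at hab with ha hb hb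
  · exact hab
  · exact absurd (hab ▸ ha) (hφB (2*b))
  · exact absurd (hab ▸ hb) (hφB (2*a))
  · have := hφ hab; omega

lemma qfun_fix {B : Finset ℕ} {φ : ℕ → ℕ} : ∀ b ∈ B, qfun B φ b = b := by
  intro b hb; simp [qfun, hb]

lemma pfun_fix {A B : Finset ℕ} {g φ : ℕ → ℕ} (hgC : ∀ n ∈ A ∩ B, g n = n) :
    ∀ a ∈ A, pfun A B g φ a = a := by
  intro a ha
  unfold pfun
  by_cases hb : a ∈ B
  · rw [if_pos hb]; exact hgC a (Finset.mem_inter.mpr ⟨ha, hb⟩)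
  · rw [if_neg hb, if_pos ha]

lemma pfun_qfun {A B : Finset ℕ} {g φ : ℕ → ℕ} (hφ : Function.Injective φ)
    (hφA : ∀ n, φ n ∉ A) (hφB : ∀ n, φ n ∉ B) :
    ∀ n, pfun A B g φ (qfun B φ n) = g n := by
  intro n
  by_cases hb : n ∈ B
  · simp [qfun, pfun, hb]
  · have hq : qfun B φ n = φ (2*n) := by simp [qfun, hb]
    rw [hq]
    unfold pfun
    rw [if_neg (hφB (2*n)), if_neg (hφA (2*n))]
    have hex : ∃ m, m ∉ B ∧ φ (2*n) = φ (2*m) := ⟨n, hb, rfl⟩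
    rw [dif_pos hex]
    have hspec := hex.choose_spec
    have h1 : 2*n = 2*hex.choose := hφ hspec.2
    have h2 : hex.choose = n := by omega
    rw [h2]

lemma pfun_inj {A B : Finset ℕ} {g φ : ℕ → ℕ}
    (hg : Function.Injective g)
    (hgC : ∀ n ∈ A ∩ B, g n = n)
    (hgA : ∀ n, n ∉ A ∩ B → g n ∉ A)
    (hφ : Function.Injective φ)
    (hφA : ∀ n, φ n ∉ A)
    (hφg : ∀ n m, φ n ≠ g m) :
    Function.Injective (pfun A B g φ) := by
  intro a b hab
  unfold pfun at hab
  by_cases haB : a ∈ B <;> by_cases hbB : b ∈ B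
  · rw [if_pos haB, if_pos hbB] at hab; exact hg hab
  · -- a ∈ B, b ∉ B
    rw [if_pos haB, if_neg hbB] at hab
    by_cases hbA : b ∈ A
    · rw [if_pos hbA] at hab
      -- hab : g a = b, b ∈ A \ B
      by_cases haA : a ∈ A
      · have h1 := hgC a (Finset.mem_inter.mpr ⟨haA, haB⟩)
        rw [h1] at hab; rw [hab] at haB; exact absurd haB hbB
      · have h1 : g a ∉ A := hgA a (fun h => haA (Finset.mem_inter.mp h).1)
        rw [hab] at h1; exact absurd hbA h1
    · rw [if_neg hbA] at hab
      by_cases hbx : ∃ n, n ∉ B ∧ b = φ (2*n)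
      · rw [dif_pos hbx] at hab
        have h1 := hg hab
        rw [h1] at haB
        exact absurd haB hbx.choose_spec.1
      · rw [dif_neg hbx] at hab
        exact absurd hab.symm (hφg (2*b+1) a)
  · -- a ∉ B, b ∈ B
    rw [if_neg haB, if_pos hbB] at hab
    by_cases haA : a ∈ A
    · rw [if_pos haA] at hab
      -- hab : a = g b
      by_cases hbA : b ∈ A
      · have h1 := hgC b (Finset.mem_inter.mpr ⟨hbA, hbB⟩)
        rw [h1] at hab; rw [← hab] at hbB; exact absurd hbB haB
      · have h1 : g b ∉ A := hgA b (fun h => hbA (Finset.mem_inter.mp h).1)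
        rw [← hab] at h1; exact absurd haA h1
    · rw [if_neg haA] at hab
      by_cases hax : ∃ n, n ∉ B ∧ a = φ (2*n)
      · rw [dif_pos hax] at hab
        have h1 := hg hab
        rw [← h1] at hbB
        exact absurd hbB hax.choose_spec.1
      · rw [dif_neg hax] at hab
        exact absurd hab (hφg (2*a+1) b)
  · -- a ∉ B, b ∉ B
    rw [if_neg haB, if_neg hbB] at hab
    by_cases haA : a ∈ A <;> by_cases hbA : b ∈ A
    · rw [if_pos haA, if_pos hbA] at hab; exact hab
    · rw [if_pos haA, if_neg hbA] at hab
      by_cases hbx : ∃ n, n ∉ B ∧ b = φ (2*n)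
      · rw [dif_pos hbx] at hab
        have h1 : g hbx.choose ∉ A :=
          hgA hbx.choose (fun h => hbx.choose_spec.1 (Finset.mem_inter.mp h).2)
        rw [← hab] at h1; exact absurd haA h1
      · rw [dif_neg hbx] at hab
        rw [hab] at haA; exact absurd haA (hφA (2*b+1))
    · rw [if_neg haA, if_pos hbA] at hab
      by_cases hax : ∃ n, n ∉ B ∧ a = φ (2*n)
      · rw [dif_pos hax] at hab
        have h1 : g hax.choose ∉ A :=
          hgA hax.choose (fun h => hax.choose_spec.1 (Finset.mem_inter.mp h).2)
        rw [hab] at h1; exact absurd hbA h1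
      · rw [dif_neg hax] at hab
        rw [← hab] at hbA; exact absurd hbA (hφA (2*a+1))
    · rw [if_neg haA, if_neg hbA] at hab
      by_cases hax : ∃ n, n ∉ B ∧ a = φ (2*n) <;>
        by_cases hbx : ∃ n, n ∉ B ∧ b = φ (2*n)
      · rw [dif_pos hax, dif_pos hbx] at hab
        have h1 := hg hab
        rw [hax.choose_spec.2, hbx.choose_spec.2, h1]
      · rw [dif_pos hax, dif_neg hbx] at hab
        exact absurd hab.symm (hφg (2*b+1) _)
      · rw [dif_neg hax, dif_pos hbx] at hab
        exact absurd hab (hφg (2*a+1) _)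
      · rw [dif_neg hax, dif_neg hbx] at hab
        have := hφ hab
        omega

/-- The key lemma: if `x` is supported on `A` and on `B`, and `g` fixes `A ∩ B`
pointwise, moves everything else outside `A`, and there is a fresh supply `φ`
avoiding `A`, `B` and the range of `g`, then `g` fixes `x`. -/
lemma lemS {X : Type*} [MulAction (Minj ℕ) X] {x : X} {A B : Finset ℕ}
    (hA : Supported (A : Set ℕ) x) (hB : Supported (B : Set ℕ) x)
    (g : Minj ℕ) (hgC : ∀ n ∈ A ∩ B, (g : ℕ → ℕ) n = n)
    (hgA : ∀ n, n ∉ A ∩ B → (g : ℕ → ℕ) n ∉ A)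
    (φ : ℕ → ℕ) (hφ : Function.Injective φ)
    (hφA : ∀ n, φ n ∉ A) (hφB : ∀ n, φ n ∉ B)
    (hφg : ∀ n m, φ n ≠ (g : ℕ → ℕ) m) :
    g • x = x := by
  have hg : Function.Injective (g : ℕ → ℕ) := g.2
  let qM : Minj ℕ := ⟨qfun B φ, qfun_inj hφ hφB⟩
  let pM : Minj ℕ := ⟨pfun A B (g : ℕ → ℕ) φ, pfun_inj hg hgC hgA hφ hφA hφg⟩
  have hgfact : g = pM * qM := by
    apply Subtype.ext
    funext n
    exact (pfun_qfun hφ hφA hφB n).symm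
  have hq : qM • x = x := hB qM (fun b hb => qfun_fix b (Finset.mem_coe.mp hb))
  have hp : pM • x = x := hA pM (fun a ha => pfun_fix hgC a (Finset.mem_coe.mp ha))
  rw [hgfact, mul_smul, hq, hp]

/-- If `x` is supported on the finite sets `A` and `B`, then it is supported on `A ∩ B`;
consequently every finitely supported element is supported on its support. -/
theorem stmt11 (X : Type*) [MulAction (Minj ℕ) X] :
    (∀ (x : X) (A B : Finset ℕ), Supported (A : Set ℕ) x → Supported (B : Set ℕ) x →
      Supported ((A ∩ B : Finset ℕ) : Set ℕ) x) ∧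
    (∀ x : X, FinSupported (U := ℕ) x → Supported (supp (U := ℕ) x) x) := by
  classical
  have part1 : ∀ (x : X) (A B : Finset ℕ), Supported (A : Set ℕ) x → Supported (B : Set ℕ) x →
      Supported ((A ∩ B : Finset ℕ) : Set ℕ) x := by
    intro x A B hA hB u hu
    have hu' : ∀ n ∈ A ∩ B, (u : ℕ → ℕ) n = n := fun n hn => hu n (Finset.mem_coe.mpr hn)
    -- choose a large `N`
    have hpre : ({n | (u : ℕ → ℕ) n ∈ (A ∪ B : Finset ℕ)} : Set ℕ).Finite := by
      have h0 : ({n | (u : ℕ → ℕ) n ∈ (A ∪ B : Finset ℕ)} : Set ℕ)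
          = (u : ℕ → ℕ) ⁻¹' ((A ∪ B : Finset ℕ) : Set ℕ) := rfl
      rw [h0]
      exact Set.Finite.preimage (u.2.injOn) (A ∪ B).finite_toSet
    obtain ⟨N, hN1, hN2⟩ : ∃ N : ℕ, (∀ m, m ∈ A ∪ B → m < N) ∧
        (∀ n, N ≤ n → (u : ℕ → ℕ) n ∉ A ∪ B) := by
      refine ⟨((A ∪ B) ∪ hpre.toFinset).sup id + 1, ?_, ?_⟩
      · intro m hm
        have hmt : m ∈ (A ∪ B) ∪ hpre.toFinset := Finset.mem_union_left _ hm
        have := Finset.le_sup (f := id) hmt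
        simp only [id] at this
        omega
      · intro n hn hcon
        have hmem : n ∈ hpre.toFinset := by
          rw [Set.Finite.mem_toFinset]; exact hcon
        have hmt : n ∈ (A ∪ B) ∪ hpre.toFinset := Finset.mem_union_right _ hmem
        have := Finset.le_sup (f := id) hmt
        simp only [id] at this
        omega
    -- the freshening map `e`
    set C := A ∩ B with hC
    have einj : Function.Injective (fun n => if n ∈ C then n else 2*n + N) := by
      intro a b hab
      simp only at hab
      split_ifs at hab with ha hb hb
      · exact hab
      · have : a < N := hN1 a (Finset.mem_union_left _ (Finset.mem_inter.mp ha).1)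
        omega
      · have : b < N := hN1 b (Finset.mem_union_left _ (Finset.mem_inter.mp hb).1)
        omega
      · omega
    set eM : Minj ℕ := ⟨fun n => if n ∈ C then n else 2*n + N, einj⟩ with heM
    have heapp : ∀ n, (eM : ℕ → ℕ) n = if n ∈ C then n else 2*n + N := fun n => rfl
    have heC : ∀ n ∈ C, (eM : ℕ → ℕ) n = n := by
      intro n hn; rw [heapp, if_pos hn]
    have heout : ∀ n, n ∉ C → (eM : ℕ → ℕ) n = 2*n + N := by
      intro n hn; rw [heapp, if_neg hn]
    -- first application of the key lemma: `e • x = x`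
    have h1 : eM • x = x := by
      apply lemS hA hB eM heC ?_ (fun n => 2*n + 1 + N)
        (fun a b h => by simp only at h; omega)
      · intro n hmem
        have := hN1 _ (Finset.mem_union_left _ hmem)
        omega
      · intro n hmem
        have := hN1 _ (Finset.mem_union_right _ hmem)
        omega
      · intro n m
        rw [heapp]
        split_ifs with hm
        · have : m < N := hN1 m (Finset.mem_union_left _ (Finset.mem_inter.mp hm).1)
          omega
        · omega
      · intro n hn
        rw [heout n hn]
        intro hmem
        have := hN1 _ (Finset.mem_union_left _ hmem)
        omega
    -- second application: `(u * e) • x = x`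
    have h2 : (u * eM) • x = x := by
      apply lemS hA hB (u * eM) ?_ ?_ (fun n => (u : ℕ → ℕ) (2*n + 1 + N))
        (fun a b h => by simp only at h; have := u.2 h; omega)
      · intro n hmem
        exact (hN2 (2*n+1+N) (by omega)) (Finset.mem_union_left _ hmem)
      · intro n hmem
        exact (hN2 (2*n+1+N) (by omega)) (Finset.mem_union_right _ hmem)
      · intro n m h
        rw [Minj.mul_apply] at h
        have h' := u.2 h
        rw [heapp] at h'
        split_ifs at h' with hm
        · have : m < N := hN1 m (Finset.mem_union_left _ (Finset.mem_inter.mp hm).1)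
          omega
        · omega
      · intro n hn
        rw [Minj.mul_apply, heC n hn]
        exact hu' n hn
      · intro n hn
        rw [Minj.mul_apply, heout n hn]
        intro hc
        exact (hN2 (2*n+N) (by omega)) (Finset.mem_union_left _ hc)
    rw [mul_smul, h1] at h2
    exact h2
  refine ⟨part1, ?_⟩
  intro x hx
  obtain ⟨A₀, hA₀⟩ := hx
  have hP : ∃ n : ℕ, ∃ A : Finset ℕ, A.card = n ∧ Supported (A : Set ℕ) x :=
    ⟨A₀.card, A₀, rfl, hA₀⟩
  obtain ⟨Am, hcard, hAm⟩ := Nat.find_spec hP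
  have hmin : ∀ (B : Finset ℕ), Supported (B : Set ℕ) x → Am ⊆ B := by
    intro B hBsup
    by_contra hsub
    have hsupAB : Supported ((Am ∩ B : Finset ℕ) : Set ℕ) x := part1 x Am B hAm hBsup
    have hne : Am ∩ B ≠ Am := fun h => hsub (Finset.inter_eq_left.mp h)
    have hss : Am ∩ B ⊂ Am := Finset.ssubset_iff_subset_ne.mpr ⟨Finset.inter_subset_left, hne⟩
    have hlt : (Am ∩ B).card < Nat.find hP := by
      have := Finset.card_lt_card hss
      omega
    exact Nat.find_min hP hlt ⟨Am ∩ B, rfl, hsupAB⟩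
  have hsuppeq : supp (U := ℕ) x = (Am : Set ℕ) := by
    apply Set.Subset.antisymm
    · intro i hi
      exact Finset.mem_coe.mpr (hi Am hAm)
    · intro i hi B hBsup
      exact hmin B hBsup (Finset.mem_coe.mp hi)
  rw [hsuppeq]
  exact hAm
end

section
/- Let C be an M(ℕ)-category and x a finitely supported object of C. If v in M(ℕ) fixes supp(x) elementwise, then v • x = x and the isomorphism ι(v,x) : x → v • x = x is the identity morphism of x. -/
open CategoryTheory

section SupportLemmas

/-- A transposition, as an element of `Minj ℕ`. -/
noncomputable def Minj.swap (a b : ℕ) : Minj ℕ :=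
  ⟨⇑(Equiv.swap a b), (Equiv.swap a b).injective⟩

lemma Minj.swap_apply (a b n : ℕ) : Minj.swap a b n = Equiv.swap a b n := rfl

lemma Minj.swap_mul_self (a b : ℕ) : Minj.swap a b * Minj.swap a b = 1 := by
  apply Subtype.ext
  funext n
  show Equiv.swap a b (Equiv.swap a b n) = n
  exact Equiv.swap_apply_self a b n

/-- If `x` is supported on `A` and on `B`, and `a ∉ B`, then `x` is supported on
`A.erase a`. -/
lemma supported_erase {X : Type*} [MulAction (Minj ℕ) X] (x : X)
    (A B : Finset ℕ) (hA : Supported (A : Set ℕ) x) (hB : Supported (B : Set ℕ) x)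
    (a : ℕ) (haB : a ∉ B) : Supported ((A.erase a : Finset ℕ) : Set ℕ) x := by
  intro u hu
  -- pick a fresh element c
  have hfin : ((↑A ∪ ↑B : Set ℕ) ∪ (⇑u) ⁻¹' (↑A ∪ ↑B)).Finite := by
    have h1 : ((↑A : Set ℕ) ∪ ↑B).Finite := (A.finite_toSet).union (B.finite_toSet)
    exact h1.union (h1.preimage (u.2.injOn))
  obtain ⟨c, hc⟩ := hfin.infinite_compl.nonempty
  simp only [Set.mem_compl_iff, Set.mem_union, Set.mem_preimage, Finset.mem_coe,
    not_or] at hc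
  obtain ⟨⟨hcA, hcB⟩, hucA, hucB⟩ := hc
  set ρ := Minj.swap a c with hρ
  set σ := Minj.swap (u c) a with hσ
  have hρx : ρ • x = x := by
    apply hB
    intro b hb
    rw [Finset.mem_coe] at hb
    rw [hρ, Minj.swap_apply]
    exact Equiv.swap_apply_of_ne_of_ne (by rintro rfl; exact haB hb)
      (by rintro rfl; exact hcB hb)
  have hσx : σ • x = x := by
    apply hB
    intro b hb
    rw [Finset.mem_coe] at hb
    rw [hσ, Minj.swap_apply]
    exact Equiv.swap_apply_of_ne_of_ne (by rintro rfl; exact hucB hb)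
      (by rintro rfl; exact haB hb)
  have hw : (σ * (u * ρ)) • x = x := by
    apply hA
    intro b hb
    rw [Finset.mem_coe] at hb
    show σ ((u * ρ) b) = b
    show σ (u (ρ b)) = b
    by_cases hba : b = a
    · subst hba
      have h1 : ρ b = c := by rw [hρ, Minj.swap_apply]; exact Equiv.swap_apply_left b c
      rw [h1, hσ, Minj.swap_apply]
      exact Equiv.swap_apply_left (u c) b
    · have h1 : ρ b = b := by
        rw [hρ, Minj.swap_apply]
        exact Equiv.swap_apply_of_ne_of_ne hba (by rintro rfl; exact hcA hb)
      rw [h1, hu b (by rw [Finset.mem_coe]; exact Finset.mem_erase.mpr ⟨hba, hb⟩)]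
      rw [hσ, Minj.swap_apply]
      exact Equiv.swap_apply_of_ne_of_ne (by rintro rfl; exact hucA hb) hba
  -- conclude
  have h1 : σ • ((u * ρ) • x) = x := by rw [← mul_smul]; exact hw
  have h2 : (u * ρ) • x = x := by
    calc (u * ρ) • x = (1 : Minj ℕ) • ((u * ρ) • x) := (one_smul _ _).symm
      _ = (σ * σ) • ((u * ρ) • x) := by rw [Minj.swap_mul_self]
      _ = σ • (σ • ((u * ρ) • x)) := mul_smul _ _ _
      _ = σ • x := by rw [h1]
      _ = x := hσx
  calc u • x = u • (ρ • x) := by rw [hρx]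
    _ = (u * ρ) • x := (mul_smul u ρ x).symm
    _ = x := h2

/-- A finitely supported element has a finite support contained in its `supp`. -/
lemma exists_support_subset_supp {X : Type*} [MulAction (Minj ℕ) X] (x : X)
    (hx : FinSupported (U := ℕ) x) :
    ∃ A : Finset ℕ, Supported (A : Set ℕ) x ∧ (↑A : Set ℕ) ⊆ supp (U := ℕ) x := by
  classical
  obtain ⟨A₀, hA₀⟩ := hx
  have hex : ∃ n, ∃ A : Finset ℕ, A.card = n ∧ Supported (A : Set ℕ) x := ⟨A₀.card, A₀, rfl, hA₀⟩
  obtain ⟨A, hcard, hA⟩ := Nat.find_spec hex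
  refine ⟨A, hA, ?_⟩
  intro a ha
  rw [Finset.mem_coe] at ha
  show ∀ B : Finset ℕ, Supported (B : Set ℕ) x → a ∈ B
  intro B hB
  by_contra haB
  have herase : Supported ((A.erase a : Finset ℕ) : Set ℕ) x := supported_erase x A B hA hB a haB
  have hlt : (A.erase a).card < Nat.find hex := by
    rw [← hcard]
    exact Finset.card_erase_lt_of_mem ha
  exact Nat.find_min hex hlt ⟨A.erase a, rfl, herase⟩

end SupportLemmas

section IotaLemmas
open CategoryTheory

variable {C : Type*} [Category C] [MulAction (Minj ℕ) C]

lemma MCat.ι_congr_obj (h : MCat ℕ C) (w : Minj ℕ) {a b : C} (p : a = b) :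
    (h.ι w a).hom = eqToHom p ≫ (h.ι w b).hom ≫ eqToHom (by rw [p]) := by
  subst p; simp

/-- multiplicativity of `u ↦ ι(u,x)` corrected by `eqToHom`s, for `u`'s fixing `x`. -/
lemma MCat.psi_mul (h : MCat ℕ C) (x : C) (u w : Minj ℕ)
    (eu : u • x = x) (ew : w • x = x) (euw : (w * u) • x = x) :
    (h.ι (w * u) x).hom ≫ eqToHom euw =
      ((h.ι u x).hom ≫ eqToHom eu) ≫ ((h.ι w x).hom ≫ eqToHom ew) := by
  have hmul := h.ι_mul u w x
  rw [h.ι_congr_obj w eu] at hmul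
  have h2 := congrArg (fun f => f ≫ eqToHom (show w • (u • x) = x by rw [eu, ew])) hmul
  simp only [Category.assoc, eqToHom_trans] at h2
  simp only [Category.assoc]
  exact h2.symm

lemma MCat.psi_congr (h : MCat ℕ C) (x : C) (u w : Minj ℕ) (huw : u = w)
    (eu : u • x = x) (ew : w • x = x) :
    (h.ι u x).hom ≫ eqToHom eu = (h.ι w x).hom ≫ eqToHom ew := by
  subst huw; rfl

end IotaLemmas

/-- If `v` fixes `supp x` elementwise and `x` is finitely supported, then `v • x = x` and
the isomorphism `ι(v,x) : x → v • x = x` is the identity of `x`. -/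
theorem stmt12 (C : Type*) [Category C] [MulAction (Minj ℕ) C] (h : MCat ℕ C)
    (x : C) (hx : FinSupported (U := ℕ) x)
    (v : Minj ℕ) (hv : ∀ a ∈ supp (U := ℕ) x, v a = a) :
    ∃ e : v • x = x, (h.ι v x).hom = eqToHom e.symm := by
  classical
  obtain ⟨A, hA, hsub⟩ := exists_support_subset_supp x hx
  have hvA : ∀ a ∈ A, v a = a := fun a ha => hv a (hsub (Finset.mem_coe.mpr ha))
  set N := A.sup id + 1 with hNdef
  have hlt : ∀ a ∈ A, a < N := fun a ha => Nat.lt_succ_of_le (Finset.le_sup (f := id) ha)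
  have hvout : ∀ n, n ∉ A → v n ∉ A := by
    intro n hn hvn
    have h1 : v (v n) = v n := hvA _ hvn
    have h2 : v n = n := v.2 h1
    rw [h2] at hvn
    exact hn hvn
  -- the injection t (doubling, even side)
  have htinj : Function.Injective (fun n => if n ∈ A then n else 2*n + 2*N) := by
    intro m n hmn
    simp only at hmn
    by_cases hm : m ∈ A <;> by_cases hn : n ∈ A
    · rw [if_pos hm, if_pos hn] at hmn; exact hmn
    · rw [if_pos hm, if_neg hn] at hmn; have := hlt m hm; omega
    · rw [if_neg hm, if_pos hn] at hmn; have := hlt n hn; omega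
    · rw [if_neg hm, if_neg hn] at hmn; omega
  -- the injection t₂ (doubling, odd side)
  have ht2inj : Function.Injective (fun n => if n ∈ A then n else 2*n + 2*N + 1) := by
    intro m n hmn
    simp only at hmn
    by_cases hm : m ∈ A <;> by_cases hn : n ∈ A
    · rw [if_pos hm, if_pos hn] at hmn; exact hmn
    · rw [if_pos hm, if_neg hn] at hmn; have := hlt m hm; omega
    · rw [if_neg hm, if_pos hn] at hmn; have := hlt n hn; omega
    · rw [if_neg hm, if_neg hn] at hmn; omega
  -- the injection u' (conjugate of v by t)
  have hu'inj : Function.Injective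
      (fun m => if 2*N ≤ m ∧ m % 2 = 0 ∧ (m - 2*N)/2 ∉ A then 2 * v ((m - 2*N)/2) + 2*N else m) := by
    intro m n hmn
    simp only at hmn
    by_cases hm : 2*N ≤ m ∧ m % 2 = 0 ∧ (m - 2*N)/2 ∉ A <;>
      by_cases hn : 2*N ≤ n ∧ n % 2 = 0 ∧ (n - 2*N)/2 ∉ A
    · rw [if_pos hm, if_pos hn] at hmn
      have h1 : v ((m - 2*N)/2) = v ((n - 2*N)/2) := by omega
      have h2 : (m - 2*N)/2 = (n - 2*N)/2 := v.2 h1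
      obtain ⟨hm1, hm2, -⟩ := hm
      obtain ⟨hn1, hn2, -⟩ := hn
      omega
    · rw [if_pos hm, if_neg hn] at hmn
      exfalso
      apply hn
      have hva : v ((m - 2*N)/2) ∉ A := hvout _ hm.2.2
      refine ⟨by omega, by omega, ?_⟩
      have h3 : (n - 2*N)/2 = v ((m - 2*N)/2) := by omega
      rw [h3]; exact hva
    · rw [if_neg hm, if_pos hn] at hmn
      exfalso
      apply hm
      have hva : v ((n - 2*N)/2) ∉ A := hvout _ hn.2.2
      refine ⟨by omega, by omega, ?_⟩
      have h3 : (m - 2*N)/2 = v ((n - 2*N)/2) := by omega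
      rw [h3]; exact hva
    · rw [if_neg hm, if_neg hn] at hmn; exact hmn
  set t : Minj ℕ := ⟨fun n => if n ∈ A then n else 2*n + 2*N, htinj⟩ with htdef
  set t₂ : Minj ℕ := ⟨fun n => if n ∈ A then n else 2*n + 2*N + 1, ht2inj⟩ with ht2def
  set u' : Minj ℕ := ⟨fun m => if 2*N ≤ m ∧ m % 2 = 0 ∧ (m - 2*N)/2 ∉ A
      then 2 * v ((m - 2*N)/2) + 2*N else m, hu'inj⟩ with hu'def
  have ht_app : ∀ n, t n = if n ∈ A then n else 2*n + 2*N := fun n => rfl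
  have ht2_app : ∀ n, t₂ n = if n ∈ A then n else 2*n + 2*N + 1 := fun n => rfl
  have hu'_app : ∀ m, u' m = if 2*N ≤ m ∧ m % 2 = 0 ∧ (m - 2*N)/2 ∉ A
      then 2 * v ((m - 2*N)/2) + 2*N else m := fun m => rfl
  -- evaluation lemmas
  have hu'_A : ∀ a ∈ A, u' a = a := by
    intro a ha
    rw [hu'_app, if_neg]
    intro hc
    have := hlt a ha
    omega
  have hu'_even : ∀ k, k ∉ A → u' (2*k + 2*N) = 2 * v k + 2*N := by
    intro k hk
    have hdiv : (2*k + 2*N - 2*N)/2 = k := by omega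
    rw [hu'_app, if_pos ⟨by omega, by omega, by rw [hdiv]; exact hk⟩, hdiv]
  have hu'_odd : ∀ m, m % 2 = 1 → u' m = m := by
    intro m hm
    rw [hu'_app, if_neg]
    intro hc
    omega
  -- t, t₂, u' fix A, hence fix x
  have et : t • x = x := by
    apply hA
    intro a ha
    rw [Finset.mem_coe] at ha
    rw [ht_app, if_pos ha]
  have es : t₂ • x = x := by
    apply hA
    intro a ha
    rw [Finset.mem_coe] at ha
    rw [ht2_app, if_pos ha]
  have eu' : u' • x = x := by
    apply hA
    intro a ha
    rw [Finset.mem_coe] at ha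
    exact hu'_A a ha
  have ev : v • x = x := by
    apply hA
    intro a ha
    rw [Finset.mem_coe] at ha
    exact hvA a ha
  -- key monoid equations
  have htv : u' * t = t * v := by
    apply DFunLike.coe_injective
    funext n
    show (u' * t) n = (t * v) n
    rw [Minj.mul_apply, Minj.mul_apply]
    by_cases hn : n ∈ A
    · rw [ht_app, if_pos hn, hu'_A n hn, hvA n hn, ht_app, if_pos hn]
    · rw [ht_app, if_neg hn, hu'_even n hn, ht_app, if_neg (hvout n hn)]
  have ht2e : u' * t₂ = t₂ := by
    apply DFunLike.coe_injective
    funext n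
    show (u' * t₂) n = t₂ n
    rw [Minj.mul_apply]
    by_cases hn : n ∈ A
    · rw [ht2_app, if_pos hn, hu'_A n hn]
    · rw [ht2_app, if_neg hn, hu'_odd _ (by omega)]
  -- object equalities for products
  have e1 : (u' * t₂) • x = x := by rw [ht2e]; exact es
  have e3 : (t * v) • x = x := by rw [mul_smul, ev]; exact et
  have e2 : (u' * t) • x = x := by rw [htv]; exact e3
  -- the ψ algebra
  have hm1 := h.psi_mul x t₂ u' es eu' e1
  have hc1 := h.psi_congr x (u' * t₂) t₂ ht2e e1 es
  have hu'id : (h.ι u' x).hom ≫ eqToHom eu' = 𝟙 x := by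
    rw [← cancel_epi ((h.ι t₂ x).hom ≫ eqToHom es), Category.comp_id]
    rw [← hm1]
    exact hc1
  have hm2 := h.psi_mul x t u' et eu' e2
  have hc2 := h.psi_congr x (u' * t) (t * v) htv e2 e3
  have hm3 := h.psi_mul x v t ev et e3
  have hvid : (h.ι v x).hom ≫ eqToHom ev = 𝟙 x := by
    have key : ((h.ι v x).hom ≫ eqToHom ev) ≫ ((h.ι t x).hom ≫ eqToHom et)
        = (h.ι t x).hom ≫ eqToHom et := by
      rw [← hm3, ← hc2, hm2, hu'id, Category.comp_id]
    rw [← cancel_mono ((h.ι t x).hom ≫ eqToHom et), Category.id_comp]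
    exact key
  refine ⟨ev, ?_⟩
  calc (h.ι v x).hom = ((h.ι v x).hom ≫ eqToHom ev) ≫ eqToHom ev.symm := by
        simp [eqToHom_trans]
    _ = 𝟙 x ≫ eqToHom ev.symm := by rw [hvid]
    _ = eqToHom ev.symm := Category.id_comp _
end
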